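/- arXiv:2405.20257 — 5 statements merged into one kernel-verified Lean document; each statement's English description precedes it below -/
import Mathlib

section
/- Let G_1, ..., G_n be finite groups and let p and q be distinct primes. The direct product G_1 × ... × G_n contains a Schmidt (p,q)-subgroup if and only if at least one of the groups G_i contains a Schmidt (p,q)-subgroup. -/
/-- A Schmidt group: a finite non-nilpotent group all of whose proper subgroups are nilpotent. -/
def IsSchmidtGroup (G : Type*) [Group G] : Prop :=
  Finite G ∧ ¬ Group.IsNilpotent G ∧ ∀ H : Subgroup G, H ≠ ⊤ → Group.IsNilpotent H

/-- A Schmidt `(p, q)`-group: a Schmidt group whose order is divisible by no primes other than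
`p` and `q` and whose Sylow `p`-subgroup is normal. -/
def IsSchmidtPQGroup (p q : ℕ) (G : Type*) [Group G] : Prop :=
  IsSchmidtGroup G ∧ (∀ r : ℕ, r.Prime → r ∣ Nat.card G → r = p ∨ r = q) ∧
    ∀ P : Sylow p G, (P : Subgroup G).Normal

/-- `G` contains a Schmidt `(p, q)`-subgroup. -/
def HasSchmidtPQSubgroup (p q : ℕ) (G : Type*) [Group G] : Prop :=
  ∃ H : Subgroup G, IsSchmidtPQGroup p q H


section Lemmas

variable {p q : ℕ}

lemma mySylowFinite {G : Type*} [Group G] [Finite G] : Finite (Sylow p G) :=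
  Finite.of_injective (fun P => (P : Subgroup G)) (fun _ _ h => Sylow.ext h)

/-- If `N` is a normal `p`-subgroup of index prime to `p`, then every Sylow `p`-subgroup is `N`. -/
lemma sylow_eq_of_pgroup {G : Type*} [Group G] [Finite G] [Fact p.Prime]
    {N : Subgroup G} (hN : IsPGroup p N) (hNn : N.Normal) (hidx : ¬ p ∣ N.index) :
    ∀ P : Sylow p G, (P : Subgroup G) = N := by
  haveI : Finite (Sylow p G) := mySylowFinite
  obtain ⟨Q, hQ⟩ := hN.exists_le_sylow
  have hQN : (Q : Subgroup G) = N := by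
    have h1 : N.relIndex Q * (Q : Subgroup G).index = N.index :=
      Subgroup.relIndex_mul_index hQ
    obtain ⟨k, hk⟩ := Q.2.exists_card_eq
    have h2 : N.relIndex Q ∣ p ^ k := hk ▸ Subgroup.index_dvd_card (N.subgroupOf Q)
    obtain ⟨j, hjk, hj⟩ := (Nat.dvd_prime_pow Fact.out).mp h2
    rcases Nat.eq_zero_or_pos j with hj0 | hj0
    · subst hj0
      simp only [pow_zero] at hj
      exact le_antisymm (Subgroup.relIndex_eq_one.mp hj) hQ |>.symm ▸ rfl
    · exfalso
      apply hidx
      rw [← h1, hj]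
      exact Dvd.dvd.mul_right (dvd_pow_self p hj0.ne') _
  haveI hQnorm : (Q : Subgroup G).Normal := hQN ▸ hNn
  intro P
  obtain ⟨g, hg⟩ := MulAction.exists_smul_eq G Q P
  rw [← hg, Sylow.smul_eq_of_normal]
  exact hQN

lemma all_sylow_normal {G : Type*} [Group G] [Finite G] [Fact p.Prime]
    {N : Subgroup G} (hN : IsPGroup p N) (hNn : N.Normal) (hidx : ¬ p ∣ N.index) :
    ∀ P : Sylow p G, (P : Subgroup G).Normal :=
  fun P => (sylow_eq_of_pgroup hN hNn hidx P) ▸ hNn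

lemma sylow_normal_subgroup {G : Type*} [Group G] [Finite G] [Fact p.Prime]
    (h : ∀ P : Sylow p G, (P : Subgroup G).Normal) (K : Subgroup G) :
    ∀ P : Sylow p K, (P : Subgroup K).Normal := by
  haveI : Finite (Sylow p G) := mySylowFinite
  obtain ⟨Q⟩ : Nonempty (Sylow p G) := inferInstance
  haveI := h Q
  apply all_sylow_normal (N := (Q : Subgroup G).subgroupOf K)
  · exact Q.2.comap_subtype
  · exact (h Q).comap K.subtype
  · intro hdvd
    apply Q.not_dvd_index
    have h1 : ((Q : Subgroup G).subgroupOf K).index = (Q : Subgroup G).relIndex K := rfl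
    rw [h1] at hdvd
    exact hdvd.trans (Subgroup.relIndex_dvd_index_of_normal (Q : Subgroup G) K)

lemma sylow_normal_map {G H : Type*} [Group G] [Group H] [Finite G] [Fact p.Prime]
    (f : G →* H) (hf : Function.Surjective f)
    (h : ∀ P : Sylow p G, (P : Subgroup G).Normal) :
    ∀ P : Sylow p H, (P : Subgroup H).Normal := by
  haveI : Finite H := Finite.of_surjective f hf
  haveI : Finite (Sylow p G) := mySylowFinite
  obtain ⟨Q⟩ : Nonempty (Sylow p G) := inferInstance
  apply all_sylow_normal (N := (Q : Subgroup G).map f)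
  · exact Q.2.map f
  · exact (h Q).map f hf
  · intro hdvd
    exact Q.not_dvd_index (hdvd.trans (Subgroup.index_map_dvd _ hf))

lemma isSchmidtPQ_of_mulEquiv {A B : Type*} [Group A] [Group B] [Fact p.Prime]
    (e : A ≃* B) (h : IsSchmidtPQGroup p q A) : IsSchmidtPQGroup p q B := by
  obtain ⟨⟨hfin, hnil, hsub⟩, hpr, hsyl⟩ := h
  haveI : Finite A := hfin
  haveI : Finite B := Finite.of_surjective e e.surjective
  refine ⟨⟨‹Finite B›, ?_, ?_⟩, ?_, ?_⟩
  · intro hn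
    exact hnil (nilpotent_of_surjective (h := hn) e.symm.toMonoidHom e.symm.surjective)
  · intro H hH
    have hco : H.comap e.toMonoidHom ≠ ⊤ := by
      intro hc
      apply hH
      have := Subgroup.map_comap_eq_self_of_surjective (f := e.toMonoidHom) e.surjective H
      rw [← this, hc, Subgroup.map_top_of_surjective _ e.surjective]
    have hn := hsub _ hco
    have e2 : (H.comap e.toMonoidHom) ≃* H :=
      (e.subgroupMap _).trans
        (MulEquiv.subgroupCongr (Subgroup.map_comap_eq_self_of_surjective (f := e.toMonoidHom) e.surjective H))
    exact nilpotent_of_surjective (h := hn) e2.toMonoidHom e2.surjective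
  · intro r hr hdvd
    exact hpr r hr (by rwa [Nat.card_congr e.toEquiv] )
  · exact sylow_normal_map e.toMonoidHom e.surjective hsyl

lemma hasSchmidt_map {A B : Type*} [Group A] [Group B] [Fact p.Prime]
    (f : A →* B) (hf : Function.Injective f)
    (h : HasSchmidtPQSubgroup p q A) : HasSchmidtPQSubgroup p q B := by
  obtain ⟨H, hH⟩ := h
  exact ⟨H.map f, isSchmidtPQ_of_mulEquiv (H.equivMapOfInjective f hf) hH⟩

universe u

lemma exists_schmidt_pq [Fact p.Prime] :
    ∀ (n : ℕ) (G : Type u) [Group G] [Finite G], Nat.card G ≤ n →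
      ¬ Group.IsNilpotent G →
      (∀ r : ℕ, r.Prime → r ∣ Nat.card G → r = p ∨ r = q) →
      (∀ P : Sylow p G, (P : Subgroup G).Normal) →
      HasSchmidtPQSubgroup p q G := by
  intro n
  induction n with
  | zero =>
    intro G _ _ hle _ _ _
    have : 0 < Nat.card G := Nat.card_pos
    omega
  | succ n ih =>
    intro G _ _ hle hnil hpr hsyl
    by_cases hall : ∀ H : Subgroup G, H ≠ ⊤ → Group.IsNilpotent H
    · exact ⟨⊤, isSchmidtPQ_of_mulEquiv Subgroup.topEquiv.symm ⟨⟨‹Finite G›, hnil, hall⟩, hpr, hsyl⟩⟩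
    · push_neg at hall
      obtain ⟨K, hKne, hKnil⟩ := hall
      have hdvd := Subgroup.card_subgroup_dvd_card K
      have hne : Nat.card K ≠ Nat.card G := fun hcard => hKne (Subgroup.eq_top_of_card_eq K hcard)
      have hlt : Nat.card K < Nat.card G :=
        lt_of_le_of_ne (Nat.le_of_dvd Nat.card_pos hdvd) hne
      have hrec := ih K (by omega) hKnil
        (fun r hr hd => hpr r hr (hd.trans hdvd))
        (sylow_normal_subgroup hsyl K)
      exact hasSchmidt_map K.subtype K.subtype_injective hrec

end Lemmas

theorem statement_7 (n : ℕ) (G : Fin n → Type*) [∀ i, Group (G i)] [∀ i, Finite (G i)]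
    (p q : ℕ) (hp : p.Prime) (hq : q.Prime) (hpq : p ≠ q) :
    HasSchmidtPQSubgroup p q (∀ i, G i) ↔ ∃ i, HasSchmidtPQSubgroup p q (G i) := by
  haveI : Fact p.Prime := ⟨hp⟩
  constructor
  · rintro ⟨S, hS⟩
    haveI : Finite S := hS.1.1
    have hnotall : ¬ ∀ i, Group.IsNilpotent ((Pi.evalMonoidHom G i).comp S.subtype).range := by
      intro hall
      apply hS.1.2.1
      haveI := hall
      let f : S →* ∀ i, ((Pi.evalMonoidHom G i).comp S.subtype).range :=
        Pi.monoidHom fun i => ((Pi.evalMonoidHom G i).comp S.subtype).rangeRestrict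
      have hinj : Function.Injective f := by
        intro s t h
        apply Subtype.ext
        funext i
        exact Subtype.ext_iff.mp (congrFun h i)
      have e := MonoidHom.ofInjective hinj
      exact nilpotent_of_surjective e.symm.toMonoidHom e.symm.surjective
    push_neg at hnotall
    obtain ⟨i, hi⟩ := hnotall
    refine ⟨i, ?_⟩
    set f := (Pi.evalMonoidHom G i).comp S.subtype with hf
    have hsur : Function.Surjective f.rangeRestrict := f.rangeRestrict_surjective
    have h1 : HasSchmidtPQSubgroup p q f.range := by
      refine exists_schmidt_pq (Nat.card f.range) _ le_rfl hi ?_ ?_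
      · intro r hr hd
        exact hS.2.1 r hr (hd.trans (Subgroup.card_dvd_of_surjective f.rangeRestrict hsur))
      · exact sylow_normal_map f.rangeRestrict hsur hS.2.2
    exact hasSchmidt_map f.range.subtype f.range.subtype_injective h1
  · rintro ⟨i, hi⟩
    classical
    refine hasSchmidt_map (MonoidHom.mulSingle G i) ?_ hi
    intro x y hxy
    simpa using congrFun hxy i
end

section
/- For any two distinct primes p and q there exists a Schmidt (p,q)-group; moreover, it can be chosen so that its Sylow p-subgroup is a normal elementary abelian p-group and its Sylow q-subgroup is cyclic of order q. -/
open SemidirectProduct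

theorem nilpotent_of_comm' {G : Type*} [Group G] (H : Subgroup G)
    (h : ∀ x ∈ H, ∀ y ∈ H, x * y = y * x) : Group.IsNilpotent H := by
  letI : CommGroup H := { (inferInstance : Group H) with
    mul_comm := fun a b => Subtype.ext (h a a.2 b b.2) }
  exact CommGroup.isNilpotent


theorem galois_adjoin_zeta_top (p q n : ℕ) [Fact p.Prime] (hq : q.Prime)
    (hn : n ≠ 0) (hmin : ∀ d : ℕ, 0 < d → q ∣ p ^ d - 1 → n ≤ d)
    (ζ : (GaloisField p n)ˣ) (hζ : orderOf ζ = q) :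
    Submodule.span (ZMod p) (Set.range fun i : ℕ => ((ζ : GaloisField p n) ^ i)) = ⊤ := by
  set K := GaloisField p n with hK
  haveI : FiniteDimensional (ZMod p) K := by infer_instance
  set F := Algebra.adjoin (ZMod p) ({(ζ : K)} : Set K) with hF
  haveI : Finite F := by infer_instance
  letI : Fintype F := Fintype.ofFinite F
  letI : Field F := (Finite.isField_of_domain F).toField
  -- the element ζ inside F
  have hmem : (ζ : K) ∈ F := Algebra.self_mem_adjoin_singleton _ _
  set z : F := ⟨(ζ : K), hmem⟩ with hz
  have hordz : orderOf z = q := by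
    have h1 : orderOf ((ζ : K)) = q := by rw [orderOf_units, hζ]
    have h2 : orderOf (F.val z) = orderOf z :=
      orderOf_injective (F.val : F →* K) Subtype.val_injective z
    rw [← h1, ← h2]; rfl
  have hz0 : z ≠ 0 := by
    intro h
    have hzq : z ^ q = 1 := by rw [← hordz]; exact pow_orderOf_eq_one z
    rw [h, zero_pow hq.ne_zero] at hzq
    exact zero_ne_one hzq
  have hdvd : q ∣ Fintype.card F - 1 := by
    have := FiniteField.pow_card_sub_one_eq_one z hz0
    have := orderOf_dvd_of_pow_eq_one this
    rwa [hordz] at this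
  have hcardF : Fintype.card F = p ^ (Module.finrank (ZMod p) F) := by
    rw [Module.card_eq_pow_finrank (K := ZMod p), ZMod.card]
  set d := Module.finrank (ZMod p) F with hd
  have hdpos : 0 < d := Module.finrank_pos
  have hnd : n ≤ d := hmin d hdpos (by rw [← hcardF]; exact hdvd)
  have hdn : d ≤ n := by
    have h1 : Module.finrank (ZMod p) (Subalgebra.toSubmodule F) ≤ Module.finrank (ZMod p) K :=
      Submodule.finrank_le _
    have h2 : Module.finrank (ZMod p) K = n := GaloisField.finrank p hn
    rw [h2] at h1
    exact le_trans (le_of_eq rfl) h1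
  have hdeq : d = n := le_antisymm hdn hnd
  have htop : Subalgebra.toSubmodule F = ⊤ := by
    apply Submodule.eq_top_of_finrank_eq
    rw [GaloisField.finrank p hn]
    exact hdeq
  rw [← htop, Algebra.adjoin_eq_span]
  congr 1
  rw [← Submonoid.powers_eq_closure]
  ext x
  simp [Submonoid.mem_powers_iff, eq_comm]


theorem galois_irreducible (p q n : ℕ) [Fact p.Prime] (hq : q.Prime)
    (hn : n ≠ 0) (hmin : ∀ d : ℕ, 0 < d → q ∣ p ^ d - 1 → n ≤ d)
    (ζ : (GaloisField p n)ˣ) (hζ : orderOf ζ = q)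
    (hspan : Submodule.span (ZMod p) (Set.range fun i : ℕ => ((ζ : GaloisField p n) ^ i)) = ⊤)
    (W : AddSubgroup (GaloisField p n)) (hW : ∀ w ∈ W, (ζ : GaloisField p n) * w ∈ W) :
    W = ⊥ ∨ W = ⊤ := by
  by_cases hbot : W = ⊥
  · exact Or.inl hbot
  right
  obtain ⟨w, hwW, hw0⟩ : ∃ w ∈ W, w ≠ (0 : GaloisField p n) := by
    by_contra hcon
    push_neg at hcon
    refine hbot ?_
    ext x
    simp only [AddSubgroup.mem_bot]
    exact ⟨fun hx => hcon x hx, fun h => h ▸ W.zero_mem⟩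
  have key : ∀ k ∈ Submodule.span (ZMod p)
      (Set.range fun i : ℕ => ((ζ : GaloisField p n) ^ i)), k * w ∈ W := by
    intro k hk
    induction hk using Submodule.span_induction with
    | mem x hx =>
      obtain ⟨i, rfl⟩ := hx
      induction i with
      | zero => simpa using hwW
      | succ m ih =>
        have : ((ζ : GaloisField p n) ^ (m + 1)) * w
            = (ζ : GaloisField p n) * (((ζ : GaloisField p n) ^ m) * w) := by ring
        rw [this]
        exact hW _ ih
    | zero => simpa using W.zero_mem
    | add x y _ _ hx hy => rw [add_mul]; exact W.add_mem hx hy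
    | smul c x _ hx =>
      rw [smul_mul_assoc]
      exact (AddSubgroup.mem_toZModSubmodule p).mp
        ((AddSubgroup.toZModSubmodule p W).smul_mem c
          ((AddSubgroup.mem_toZModSubmodule p).mpr hx))
  rw [hspan] at key
  ext x
  simp only [AddSubgroup.mem_top, iff_true]
  have := key (x * w⁻¹) Submodule.mem_top
  rwa [mul_assoc, inv_mul_cancel₀ hw0, mul_one] at this


variable {K : Type} [Field K]

/-- The action of the cyclic group generated by ζ on the additive group of K. -/
def schPhi (ζ : Kˣ) : ↥(Subgroup.zpowers ζ) →* MulAut (Multiplicative K) where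
  toFun u := AddEquiv.toMultiplicative (DistribMulAction.toAddAut Kˣ K (u : Kˣ))
  map_one' := by ext x; simp
  map_mul' a b := by ext x; simp [mul_smul]

/-- The Schmidt group: semidirect product. -/
abbrev SchG (ζ : Kˣ) : Type := Multiplicative K ⋊[schPhi ζ] ↥(Subgroup.zpowers ζ)

theorem schPhi_apply (ζ : Kˣ) (g : ↥(Subgroup.zpowers ζ)) (k : K) :
    schPhi ζ g (Multiplicative.ofAdd k) = Multiplicative.ofAdd (((g : Kˣ) : K) * k) := rfl

/-- equivalence with the product, for counting -/
def schEquiv (ζ : Kˣ) : SchG ζ ≃ Multiplicative K × ↥(Subgroup.zpowers ζ) where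
  toFun x := (x.left, x.right)
  invFun a := ⟨a.1, a.2⟩
  left_inv x := by ext <;> rfl
  right_inv a := rfl

instance (ζ : Kˣ) [Fintype K] : Finite (SchG ζ) := Finite.of_equiv _ (schEquiv ζ).symm

theorem schG_card (ζ : Kˣ) [Fintype K] : Nat.card (SchG ζ) = Fintype.card K * orderOf ζ := by
  rw [Nat.card_congr (schEquiv ζ), Nat.card_prod, Nat.card_eq_fintype_card,
    Nat.card_zpowers]
  rw [Fintype.card_multiplicative]

def Vgrp (ζ : Kˣ) : Subgroup (SchG ζ) := (inl : Multiplicative K →* SchG ζ).range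

theorem mem_Vgrp_iff {ζ : Kˣ} {x : SchG ζ} : x ∈ Vgrp ζ ↔ x.right = 1 := by
  rw [Vgrp, range_inl_eq_ker_rightHom, MonoidHom.mem_ker]; rfl

theorem eq_inl_of_mem_Vgrp {ζ : Kˣ} {x : SchG ζ} (h : x ∈ Vgrp ζ) : x = inl x.left := by
  obtain ⟨a, rfl⟩ := h; simp

instance (ζ : Kˣ) : (Vgrp ζ).Normal := by
  rw [Vgrp, range_inl_eq_ker_rightHom]; infer_instance

theorem Vgrp_card (ζ : Kˣ) [Fintype K] : Nat.card (Vgrp ζ) = Fintype.card K := by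
  rw [show Nat.card (Vgrp ζ) = Nat.card (Set.range (inl : Multiplicative K →* SchG ζ)) from
    Nat.card_congr (Equiv.setCongr (MonoidHom.coe_range _)),
    Nat.card_congr (Equiv.ofInjective _ inl_injective).symm, Nat.card_eq_fintype_card,
    Fintype.card_multiplicative]

theorem Vgrp_comm {ζ : Kˣ} {x y : SchG ζ} (hx : x ∈ Vgrp ζ) (hy : y ∈ Vgrp ζ) :
    x * y = y * x := by
  obtain ⟨a, rfl⟩ := hx
  obtain ⟨b, rfl⟩ := hy
  rw [← map_mul, ← map_mul, mul_comm]

theorem Vgrp_pow {ζ : Kˣ} (p : ℕ) [CharP K p] {x : SchG ζ} (hx : x ∈ Vgrp ζ) : x ^ p = 1 := by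
  obtain ⟨a, rfl⟩ := hx
  rw [← map_pow]
  have : a ^ p = 1 := by
    have : (a ^ p).toAdd = p • a.toAdd := by simp
    have h2 : p • a.toAdd = 0 := by
      rw [nsmul_eq_mul, CharP.cast_eq_zero K p, zero_mul]
    rw [h2] at this
    exact Multiplicative.toAdd.injective this
  rw [this, map_one]

theorem sylow_p_eq (p q : ℕ) [Fact p.Prime] (hq : q.Prime) (hpq : p ≠ q) {n : ℕ}
    [Fintype K] (hcard : Fintype.card K = p ^ n) (ζ : Kˣ) (hζ : orderOf ζ = q)
    (P : Sylow p (SchG ζ)) : (P : Subgroup (SchG ζ)) = Vgrp ζ := by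
  have hp : p.Prime := Fact.out
  have hfact : (Nat.card (SchG ζ)).factorization p = n := by
    rw [schG_card, hcard, hζ, Nat.factorization_mul (pow_ne_zero n hp.ne_zero) hq.ne_zero,
      Finsupp.add_apply, hp.factorization_pow,
      Nat.factorization_eq_zero_of_not_dvd
        ((Nat.Prime.coprime_iff_not_dvd hp).mp ((Nat.coprime_primes hp hq).mpr hpq)),
      add_zero, Finsupp.single_eq_same]
  have hcardP : Nat.card P = p ^ n := by rw [Sylow.card_eq_multiplicity, hfact]
  have hV : IsPGroup p (Vgrp ζ) := IsPGroup.of_card (by rw [Vgrp_card, hcard])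
  obtain ⟨P₀, hle⟩ := hV.exists_le_sylow
  have heq : Vgrp ζ = ↑P₀ := Subgroup.eq_of_le_of_card_ge hle
    (by rw [Sylow.card_eq_multiplicity, hfact, Vgrp_card, hcard])
  have hnorm : (P₀ : Subgroup (SchG ζ)).Normal := heq ▸ inferInstance
  haveI := Sylow.unique_of_normal P₀ hnorm
  rw [Subsingleton.elim P P₀, ← heq]

theorem sylow_q_card (p q : ℕ) [Fact q.Prime] (hp : p.Prime) (hpq : p ≠ q) {n : ℕ}
    [Fintype K] (hcard : Fintype.card K = p ^ n) (ζ : Kˣ) (hζ : orderOf ζ = q)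
    (Q' : Sylow q (SchG ζ)) : Nat.card ↥(Q' : Subgroup (SchG ζ)) = q := by
  have hq : q.Prime := Fact.out
  have hfact : (Nat.card (SchG ζ)).factorization q = 1 := by
    rw [schG_card, hcard, hζ, Nat.factorization_mul (pow_ne_zero n hp.ne_zero) hq.ne_zero,
      Finsupp.add_apply, hp.factorization_pow, hq.factorization_self, Finsupp.single_apply,
      if_neg hpq, zero_add]
  have := Sylow.card_eq_multiplicity Q'
  rwa [hfact, pow_one] at this


theorem schG_not_nilpotent (p q : ℕ) [Fact p.Prime] [Fact q.Prime] (hpq : p ≠ q) {n : ℕ}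
    [Fintype K] (hcard : Fintype.card K = p ^ n) (ζ : Kˣ) (hζ : orderOf ζ = q) :
    ¬ Group.IsNilpotent (SchG ζ) := by
  intro hnil
  have hq : q.Prime := Fact.out
  have hsyl := ((isNilpotent_of_finite_tfae (G := SchG ζ)).out 0 3).mp hnil
  set ζQ : ↥(Subgroup.zpowers ζ) := ⟨ζ, Subgroup.mem_zpowers ζ⟩ with hζQ
  set b : SchG ζ := inr ζQ with hb
  have hordζQ : orderOf ζQ = q := by
    rw [← hζ]
    exact (orderOf_injective (Subgroup.zpowers ζ).subtype Subtype.val_injective ζQ).symm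
  have hordb : orderOf b = q := by
    rw [hb, orderOf_injective (inr : _ →* SchG ζ) inr_injective, hordζQ]
  have hQgrp : IsPGroup q (Subgroup.zpowers b) :=
    IsPGroup.of_card (by rw [Nat.card_zpowers, hordb, pow_one])
  obtain ⟨R, hR⟩ := hQgrp.exists_le_sylow
  have hRnorm : (R : Subgroup (SchG ζ)).Normal := hsyl q inferInstance R
  have hdisj : Disjoint (Vgrp ζ) (R : Subgroup (SchG ζ)) :=
    IsPGroup.disjoint_of_ne p q hpq _ _
      (IsPGroup.of_card (by rw [Vgrp_card, hcard])) R.isPGroup'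
  have hcomm := Subgroup.commute_of_normal_of_disjoint _ _ (inferInstance) hRnorm hdisj
    (inl (Multiplicative.ofAdd (1 : K))) b
    (show inl (Multiplicative.ofAdd (1 : K)) ∈ Vgrp ζ from ⟨Multiplicative.ofAdd (1 : K), rfl⟩)
    (hR (Subgroup.mem_zpowers b))
  have hkey : (inl (schPhi ζ ζQ (Multiplicative.ofAdd (1 : K))) : SchG ζ)
      = inl (Multiplicative.ofAdd (1 : K)) := by
    rw [inl_aut]
    rw [show (inr ζQ : SchG ζ) = b from rfl,
      show (inr ζQ⁻¹ : SchG ζ) = b⁻¹ from (by rw [hb, map_inv])]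
    rw [← hcomm.eq, mul_assoc, mul_inv_cancel, mul_one]
  have h1 : ((ζ : Kˣ) : K) * 1 = 1 := by
    have := inl_injective hkey
    rw [schPhi_apply] at this
    exact Multiplicative.ofAdd.injective this
  rw [mul_one] at h1
  have : ζ = 1 := Units.ext h1
  rw [this, orderOf_one] at hζ
  exact hq.one_lt.ne hζ

theorem schG_proper_comm (q : ℕ) [Fintype K] (hq : q.Prime) (ζ : Kˣ) (hζ : orderOf ζ = q)
    (hirr : ∀ W : AddSubgroup K, (∀ w ∈ W, (ζ : K) * w ∈ W) → W = ⊥ ∨ W = ⊤)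
    (H : Subgroup (SchG ζ)) (hH : H ≠ ⊤) :
    ∀ x ∈ H, ∀ y ∈ H, x * y = y * x := by
  set π := (rightHom : SchG ζ →* ↥(Subgroup.zpowers ζ)) with hπ
  have hcardQ : Nat.card ↥(Subgroup.zpowers ζ) = q := by rw [Nat.card_zpowers, hζ]
  by_cases hmap : H.map π = ⊤
  · -- the image is everything
    set ζQ : ↥(Subgroup.zpowers ζ) := ⟨ζ, Subgroup.mem_zpowers ζ⟩ with hζQ
    obtain ⟨h, hhH, hπh⟩ : ∃ h ∈ H, π h = ζQ := by
      have : ζQ ∈ H.map π := by rw [hmap]; trivial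
      obtain ⟨h, hh, hπ⟩ := this
      exact ⟨h, hh, hπ⟩
    set W : AddSubgroup K :=
      { carrier := {k : K | inl (Multiplicative.ofAdd k) ∈ H}
        zero_mem' := by
          show (inl (Multiplicative.ofAdd (0 : K)) : SchG ζ) ∈ H
          rw [show Multiplicative.ofAdd (0 : K) = 1 from rfl, map_one]
          exact H.one_mem
        add_mem' := by
          intro a b ha hb
          show (inl (Multiplicative.ofAdd (a + b)) : SchG ζ) ∈ H
          rw [show Multiplicative.ofAdd (a + b)
            = Multiplicative.ofAdd a * Multiplicative.ofAdd b from rfl, map_mul]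
          exact H.mul_mem ha hb
        neg_mem' := by
          intro a ha
          show (inl (Multiplicative.ofAdd (-a)) : SchG ζ) ∈ H
          rw [show Multiplicative.ofAdd (-a) = (Multiplicative.ofAdd a)⁻¹ from rfl, map_inv]
          exact H.inv_mem ha } with hW
    have hWinv : ∀ w ∈ W, (ζ : K) * w ∈ W := by
      intro k hk
      have hmem : h * inl (Multiplicative.ofAdd k) * h⁻¹ ∈ H :=
        H.mul_mem (H.mul_mem hhH hk) (H.inv_mem hhH)
      have hcalc : h * inl (Multiplicative.ofAdd k) * h⁻¹
          = inl (Multiplicative.ofAdd ((ζ : K) * k)) := by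
        conv_lhs => rw [← inl_left_mul_inr_right h]
        have hr : h.right = ζQ := hπh
        rw [hr, mul_inv_rev, ← map_inv, ← map_inv]
        calc inl h.left * inr ζQ * inl (Multiplicative.ofAdd k) * (inr ζQ⁻¹ * inl h.left⁻¹)
            = inl h.left * (inr ζQ * inl (Multiplicative.ofAdd k) * inr ζQ⁻¹) * inl h.left⁻¹ := by
              simp only [mul_assoc]
          _ = inl h.left * inl (schPhi ζ ζQ (Multiplicative.ofAdd k)) * inl h.left⁻¹ := by
              rw [← inl_aut]
          _ = inl (h.left * schPhi ζ ζQ (Multiplicative.ofAdd k) * h.left⁻¹) := by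
              rw [map_mul, map_mul, map_inv]
          _ = inl (schPhi ζ ζQ (Multiplicative.ofAdd k)) := by
              rw [mul_comm h.left, mul_assoc, mul_inv_cancel, mul_one]
          _ = inl (Multiplicative.ofAdd ((ζ : K) * k)) := by rw [schPhi_apply]
      rwa [hcalc] at hmem
    rcases hirr W hWinv with hWbot | hWtop
    · -- W = ⊥ : H meets the kernel trivially, so H is commutative
      intro x hx y hy
      have hcmem : x * y * x⁻¹ * y⁻¹ ∈ H :=
        H.mul_mem (H.mul_mem (H.mul_mem hx hy) (H.inv_mem hx)) (H.inv_mem hy)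
      have hπc : π (x * y * x⁻¹ * y⁻¹) = 1 := by
        rw [map_mul, map_mul, map_mul, map_inv, map_inv, mul_comm (π x) (π y)]
        group
      have hcV : x * y * x⁻¹ * y⁻¹ ∈ Vgrp ζ := mem_Vgrp_iff.mpr hπc
      have hc := eq_inl_of_mem_Vgrp hcV
      have hmemW : (x * y * x⁻¹ * y⁻¹).left.toAdd ∈ W := by
        show (inl (Multiplicative.ofAdd ((x * y * x⁻¹ * y⁻¹).left.toAdd)) : SchG ζ) ∈ H
        rw [ofAdd_toAdd, ← hc]
        exact hcmem
      rw [hWbot, AddSubgroup.mem_bot] at hmemW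
      have hleft1 : (x * y * x⁻¹ * y⁻¹).left = 1 := Multiplicative.toAdd.injective hmemW
      have : x * y * x⁻¹ * y⁻¹ = 1 := by rw [hc, hleft1, map_one]
      calc x * y = (x * y * x⁻¹ * y⁻¹) * (y * x) := by group
        _ = y * x := by rw [this, one_mul]
    · -- W = ⊤ : H contains the kernel, so H = ⊤, contradiction
      exfalso
      apply hH
      have hker : Vgrp ζ ≤ H := by
        intro x hxV
        rw [eq_inl_of_mem_Vgrp hxV]
        have hmem : x.left.toAdd ∈ W := by rw [hWtop]; trivial
        have : (inl (Multiplicative.ofAdd (x.left.toAdd)) : SchG ζ) ∈ H := hmem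
        rwa [ofAdd_toAdd] at this
      have h1 := Subgroup.comap_map_eq π H
      rw [hmap, Subgroup.comap_top] at h1
      have hkerV : π.ker = Vgrp ζ := by
        rw [hπ, Vgrp, range_inl_eq_ker_rightHom]
      rw [hkerV, sup_of_le_left hker] at h1
      exact h1.symm
  · -- the image is trivial : H lies in the kernel, commutative
    have hbot : H.map π = ⊥ := by
      have hdvd := Subgroup.card_subgroup_dvd_card (H.map π)
      rw [hcardQ] at hdvd
      rcases Nat.Prime.eq_one_or_self_of_dvd hq _ hdvd with h1 | h1
      · exact Subgroup.eq_bot_of_card_eq _ h1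
      · exact absurd (Subgroup.eq_top_of_card_eq _ (by rw [h1, hcardQ])) hmap
    intro x hx y hy
    have hxV : x ∈ Vgrp ζ := by
      rw [mem_Vgrp_iff]
      have : π x ∈ H.map π := ⟨x, hx, rfl⟩
      rw [hbot, Subgroup.mem_bot] at this
      exact this
    have hyV : y ∈ Vgrp ζ := by
      rw [mem_Vgrp_iff]
      have : π y ∈ H.map π := ⟨y, hy, rfl⟩
      rw [hbot, Subgroup.mem_bot] at this
      exact this
    exact Vgrp_comm hxV hyV

theorem statement_8 (p q : ℕ) (hp : p.Prime) (hq : q.Prime) (hpq : p ≠ q) :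
    ∃ (G : Type) (_ : Group G), IsSchmidtPQGroup p q G ∧
      (∀ P : Sylow p G, (P : Subgroup G).Normal ∧
        (∀ x ∈ (P : Subgroup G), ∀ y ∈ (P : Subgroup G), x * y = y * x) ∧
        (∀ x ∈ (P : Subgroup G), x ^ p = 1)) ∧
      (∀ Q : Sylow q G, IsCyclic (Q : Subgroup G) ∧ Nat.card (Q : Subgroup G) = q) := by
  haveI hFp : Fact p.Prime := ⟨hp⟩
  haveI hFq : Fact q.Prime := ⟨hq⟩
  have hcop : Nat.Coprime p q := (Nat.coprime_primes hp hq).mpr hpq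
  set u : (ZMod q)ˣ := ZMod.unitOfCoprime p hcop with hu
  set n : ℕ := orderOf u with hn'
  have hn : n ≠ 0 := (orderOf_pos u).ne'
  have hcast : ∀ d : ℕ, ((p : ZMod q) ^ d = 1 ↔ q ∣ p ^ d - 1) := by
    intro d
    have hple : 1 ≤ p ^ d := Nat.one_le_pow _ _ hp.pos
    constructor
    · intro h
      have : ((p ^ d - 1 : ℕ) : ZMod q) = 0 := by
        push_cast [Nat.cast_sub hple]
        rw [h, sub_self]
      exact (ZMod.natCast_eq_zero_iff _ _).mp this
    · intro h
      have h0 : ((p ^ d - 1 : ℕ) : ZMod q) = 0 := (ZMod.natCast_eq_zero_iff _ _).mpr h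
      rw [Nat.cast_sub hple] at h0
      push_cast at h0
      linear_combination h0
  have hmin : ∀ d : ℕ, 0 < d → q ∣ p ^ d - 1 → n ≤ d := by
    intro d hd hdvd
    have h1 : (p : ZMod q) ^ d = 1 := (hcast d).mpr hdvd
    have h2 : u ^ d = 1 := by
      ext
      rw [Units.val_pow_eq_pow_val, ZMod.coe_unitOfCoprime, h1, Units.val_one]
    exact Nat.le_of_dvd hd (orderOf_dvd_of_pow_eq_one h2)
  have hqdvd : q ∣ p ^ n - 1 := by
    apply (hcast n).mp
    have h2 : u ^ n = 1 := pow_orderOf_eq_one u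
    have := congrArg (Units.val) h2
    rwa [Units.val_pow_eq_pow_val, ZMod.coe_unitOfCoprime, Units.val_one] at this
  set K := GaloisField p n with hK
  letI : Fintype K := Fintype.ofFinite K
  letI : DecidableEq K := Classical.decEq K
  letI : Fintype Kˣ := Fintype.ofFinite Kˣ
  have hcardK : Fintype.card K = p ^ n := by
    rw [← Nat.card_eq_fintype_card, GaloisField.card p n hn]
  obtain ⟨ζ, hζ⟩ : ∃ ζ : Kˣ, orderOf ζ = q := by
    apply exists_prime_orderOf_dvd_card q
    rw [show Fintype.card Kˣ = Nat.card Kˣ from (Nat.card_eq_fintype_card).symm,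
      Nat.card_units, Nat.card_eq_fintype_card, hcardK]
    exact hqdvd
  have hspan := galois_adjoin_zeta_top p q n hq hn hmin ζ hζ
  have hirr := galois_irreducible p q n hq hn hmin ζ hζ hspan
  refine ⟨SchG ζ, inferInstance, ⟨⟨inferInstance, ?_, ?_⟩, ?_, ?_⟩, ?_, ?_⟩
  · exact schG_not_nilpotent p q hpq hcardK ζ hζ
  · exact fun H hH => nilpotent_of_comm' H (schG_proper_comm q hq ζ hζ hirr H hH)
  · intro r hr hdvd
    rw [schG_card, hcardK, hζ] at hdvd
    rcases (Nat.Prime.dvd_mul hr).mp hdvd with h1 | h1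
    · exact Or.inl ((Nat.prime_dvd_prime_iff_eq hr hp).mp (hr.dvd_of_dvd_pow h1))
    · exact Or.inr ((Nat.prime_dvd_prime_iff_eq hr hq).mp h1)
  · intro P
    rw [sylow_p_eq p q hq hpq hcardK ζ hζ P]
    infer_instance
  · intro P
    have hPV := sylow_p_eq p q hq hpq hcardK ζ hζ P
    refine ⟨by rw [hPV]; infer_instance, ?_, ?_⟩
    · intro x hx y hy
      exact Vgrp_comm (hPV ▸ hx) (hPV ▸ hy)
    · intro x hx
      exact Vgrp_pow p (hPV ▸ hx)
  · intro Q'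
    have hcardQ' := sylow_q_card p q hp hpq hcardK ζ hζ Q'
    exact ⟨isCyclic_of_prime_card hcardQ', hcardQ'⟩
end

section
/- Let p and q be distinct primes, let V be a nontrivial finite-dimensional vector space over the field with p elements, let C be a cyclic group of order q, and let C act on V by linear automorphisms so that the action is faithful and the only C-invariant subspaces of V are 0 and V. Then the semidirect product V ⋊ C is a Schmidt (p,q)-group. -/
/-- The multiplicative version of an additive automorphism group. -/
def addAutToMulAut (A : Type*) [AddGroup A] : Multiplicative (AddAut A) →* MulAut (Multiplicative A) where
  toFun e := AddEquiv.toMultiplicative e.toAdd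
  map_one' := rfl
  map_mul' _ _ := rfl


open SemidirectProduct

lemma conj_inl_aux {N G : Type*} [CommGroup N] [Group G] {φ : G →* MulAut N}
    (g : N ⋊[φ] G) (n : N) :
    g * SemidirectProduct.inl n * g⁻¹ = SemidirectProduct.inl (φ g.right n) := by
  ext
  · simp only [mul_left, mul_right, inv_left, inv_right, left_inl, right_inl, map_one,
      MulAut.one_apply, mul_one, map_mul, MulAut.apply_inv_self]
    rw [mul_comm g.left, mul_assoc]
    simp
  · simp [mul_right, inv_right]


theorem statement_9 (p q : ℕ) (hp : p.Prime) (hq : q.Prime) (hpq : p ≠ q)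
    (V : Type) [AddCommGroup V] [Module (ZMod p) V] [Module.Finite (ZMod p) V] [Nontrivial V]
    (C : Type) [Group C] (hC : IsCyclic C) (hcard : Nat.card C = q)
    [DistribMulAction C V] [SMulCommClass C (ZMod p) V]
    (hfaithful : ∀ c : C, (∀ v : V, c • v = v) → c = 1)
    (hirr : ∀ W : Submodule (ZMod p) V, (∀ c : C, ∀ v ∈ W, c • v ∈ W) → W = ⊥ ∨ W = ⊤) :
    IsSchmidtPQGroup p q
      (SemidirectProduct (Multiplicative V) C
        ((addAutToMulAut V).comp (DistribMulAction.toAddAut C V))) := by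
  haveI := Fact.mk hp
  haveI := Fact.mk hq
  haveI : Finite V := Module.finite_of_finite (ZMod p)
  haveI : Finite C := Nat.finite_of_card_ne_zero (by rw [hcard]; exact hq.pos.ne')
  set φ : C →* MulAut (Multiplicative V) :=
    (addAutToMulAut V).comp (DistribMulAction.toAddAut C V) with hφ
  have hφ_apply : ∀ (c : C) (v : V), φ c (Multiplicative.ofAdd v) = Multiplicative.ofAdd (c • v) :=
    fun c v => rfl
  haveI : Finite (Multiplicative V ⋊[φ] C) :=
    Finite.of_injective (fun g => (g.left, g.right))
      (fun a b h => by cases a; cases b; simpa [Prod.ext_iff, SemidirectProduct.ext_iff] using h)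
  have eGP : (Multiplicative V ⋊[φ] C) ≃ (Multiplicative V) × C :=
    ⟨fun g => (g.left, g.right), fun x => ⟨x.1, x.2⟩, fun g => rfl, fun x => rfl⟩
  have hcardG : Nat.card (Multiplicative V ⋊[φ] C) = Nat.card V * q := by
    rw [Nat.card_congr eGP, Nat.card_prod, Nat.card_congr Multiplicative.toAdd, hcard]
  have hps : ∀ v : V, p • v = 0 := fun v => by
    rw [← Nat.cast_smul_eq_nsmul (ZMod p), ZMod.natCast_self, zero_smul]
  have hVp : IsPGroup p (Multiplicative V) := fun x =>
    ⟨1, by rw [pow_one, show x = Multiplicative.ofAdd x.toAdd from rfl, ← ofAdd_nsmul, hps]; rfl⟩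
  obtain ⟨n, hn⟩ : ∃ n, Nat.card V = p ^ n := by
    obtain ⟨n, hn⟩ := hVp.exists_card_eq
    exact ⟨n, by rwa [Nat.card_congr Multiplicative.toAdd] at hn⟩
  set N : Subgroup (Multiplicative V ⋊[φ] C) := (inl : Multiplicative V →* _).range with hN
  have hNker : N = (rightHom : Multiplicative V ⋊[φ] C →* C).ker := range_inl_eq_ker_rightHom
  have hNnormal : N.Normal := hNker ▸ MonoidHom.normal_ker _
  have hNp : IsPGroup p N := by
    rw [hN, MonoidHom.range_eq_map]
    exact (hVp.to_subgroup ⊤).map _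
  -- Sylow p subgroups all equal N
  have hSylP : ∀ P : Sylow p (Multiplicative V ⋊[φ] C), (P : Subgroup _) = N := by
    intro P
    have hmap : IsPGroup p ((P : Subgroup _).map (rightHom : Multiplicative V ⋊[φ] C →* C)) := P.isPGroup'.map _
    obtain ⟨k, hk⟩ := hmap.exists_card_eq
    have hdvd : Nat.card ((P : Subgroup _).map (rightHom : Multiplicative V ⋊[φ] C →* C)) ∣ q :=
      hcard ▸ Subgroup.card_subgroup_dvd_card _
    rw [hk] at hdvd
    have hk0 : k = 0 := by
      by_contra h
      exact hpq ((Nat.prime_dvd_prime_iff_eq hp hq).mp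
        ((dvd_pow_self p h).trans hdvd))
    rw [hk0, pow_zero] at hk
    have h1 : (P : Subgroup _) ≤ (rightHom : Multiplicative V ⋊[φ] C →* C).ker :=
      (Subgroup.map_eq_bot_iff _).mp (Subgroup.card_eq_one.mp hk)
    rw [← hNker] at h1
    exact (P.is_maximal' hNp h1).symm
  -- not nilpotent
  have hnotnil : ¬ Group.IsNilpotent (Multiplicative V ⋊[φ] C) := by
    intro hnil
    have h4 := ((isNilpotent_of_finite_tfae (G := Multiplicative V ⋊[φ] C)).out 0 3).mp hnil
    haveI : Nontrivial C := Finite.one_lt_card_iff_nontrivial.mp (by rw [hcard]; exact hq.one_lt)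
    obtain ⟨c, hc⟩ := exists_ne (1 : C)
    have hCq : IsPGroup q C := IsPGroup.iff_card.mpr ⟨1, by rw [hcard, pow_one]⟩
    have hQ : IsPGroup q ((inr : C →* Multiplicative V ⋊[φ] C).range) := by
      rw [MonoidHom.range_eq_map]; exact (hCq.to_subgroup ⊤).map _
    obtain ⟨P, hP⟩ := hQ.exists_le_sylow
    have hPn : (P : Subgroup (Multiplicative V ⋊[φ] C)).Normal := h4 q (Fact.mk hq) P
    have key : ∀ v : V, c • v = v := by
      intro v
      set x : Multiplicative V ⋊[φ] C := inl (Multiplicative.ofAdd v) with hx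
      have h1 : inr c ∈ (P : Subgroup (Multiplicative V ⋊[φ] C)) := hP (MonoidHom.mem_range.mpr ⟨c, rfl⟩)
      have hxc : x * inr c * x⁻¹ * (inr c)⁻¹ ∈ (P : Subgroup _) :=
        mul_mem (hPn.conj_mem _ h1 x) (inv_mem h1)
      have hform : x * inr c * x⁻¹ * (inr c)⁻¹ = inl (Multiplicative.ofAdd (v - c • v)) := by
        have h2 : inr c * x⁻¹ * (inr c)⁻¹ = inl (φ c (Multiplicative.ofAdd v)⁻¹) := by
          rw [hx, ← map_inv, inl_aut, map_inv inr c]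
        rw [mul_assoc, mul_assoc, ← mul_assoc (inr c), h2, hx, ← map_mul]
        congr 1
        rw [map_inv, hφ_apply, sub_eq_add_neg, ofAdd_add, ofAdd_neg]
      rw [hform] at hxc
      obtain ⟨k, hk⟩ := P.isPGroup' ⟨_, hxc⟩
      have hk' : (inl (Multiplicative.ofAdd (v - c • v)) : Multiplicative V ⋊[φ] C) ^ q ^ k = 1 :=
        congrArg Subtype.val hk
      have hdp : orderOf (inl (Multiplicative.ofAdd (v - c • v)) : Multiplicative V ⋊[φ] C) ∣ p :=
        orderOf_dvd_of_pow_eq_one (by rw [← map_pow, ← ofAdd_nsmul, hps]; simp)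
      have hdq : orderOf (inl (Multiplicative.ofAdd (v - c • v)) : Multiplicative V ⋊[φ] C) ∣ q ^ k :=
        orderOf_dvd_of_pow_eq_one hk'
      have hcop : Nat.Coprime p (q ^ k) :=
        Nat.Coprime.pow_right k ((Nat.coprime_primes hp hq).mpr hpq)
      have hone : orderOf (inl (Multiplicative.ofAdd (v - c • v)) : Multiplicative V ⋊[φ] C) = 1 :=
        Nat.eq_one_of_dvd_coprimes hcop hdp hdq
      have := orderOf_eq_one_iff.mp hone
      have h0 : Multiplicative.ofAdd (v - c • v) = 1 := inl_injective this
      have : v - c • v = 0 := h0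
      rw [sub_eq_zero] at this
      exact this.symm
    exact hc (hfaithful c key)
  -- proper subgroups are nilpotent
  have hproper : ∀ H : Subgroup (Multiplicative V ⋊[φ] C), H ≠ ⊤ → Group.IsNilpotent H := by
    intro H hHne
    have hKdvd : Nat.card (H.map (rightHom : Multiplicative V ⋊[φ] C →* C)) ∣ q :=
      hcard ▸ Subgroup.card_subgroup_dvd_card _
    rcases (Nat.dvd_prime hq).mp hKdvd with h1 | hqq
    · -- H ≤ ker rightHom, abelian
      have hHle : H ≤ (rightHom : Multiplicative V ⋊[φ] C →* C).ker :=
        (Subgroup.map_eq_bot_iff _).mp (Subgroup.card_eq_one.mp h1)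
      have hcomm : ∀ a b : H, a * b = b * a := by
        rintro ⟨a, ha⟩ ⟨b, hb⟩
        have ha' : a ∈ (inl : Multiplicative V →* _).range := by
          rw [range_inl_eq_ker_rightHom]; exact hHle ha
        have hb' : b ∈ (inl : Multiplicative V →* _).range := by
          rw [range_inl_eq_ker_rightHom]; exact hHle hb
        obtain ⟨a0, rfl⟩ := ha'
        obtain ⟨b0, rfl⟩ := hb'
        refine Subtype.ext ?_
        show inl a0 * inl b0 = inl b0 * inl a0
        rw [← map_mul, ← map_mul, mul_comm]
      letI : CommGroup H := { (inferInstance : Group H) with mul_comm := hcomm }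
      infer_instance
    · -- image is all of C
      have hKtop : H.map (rightHom : Multiplicative V ⋊[φ] C →* C) = ⊤ :=
        Subgroup.eq_top_of_card_eq _ (by rw [hqq, hcard])
      have hsurj : ∀ c' : C, ∃ g ∈ H, rightHom g = c' := by
        intro c'
        have : c' ∈ H.map (rightHom : Multiplicative V ⋊[φ] C →* C) := hKtop ▸ Subgroup.mem_top c'
        simpa [Subgroup.mem_map] using this
      set W : Submodule (ZMod p) V :=
        AddSubgroup.toZModSubmodule p
          ((H.comap (inl : Multiplicative V →* _)).toAddSubgroup') with hW
      have hWmem : ∀ v : V, v ∈ W ↔ inl (Multiplicative.ofAdd v) ∈ H := fun v => Iff.rfl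
      have hinv : ∀ c' : C, ∀ v ∈ W, c' • v ∈ W := by
        intro c' v hv
        obtain ⟨g, hgH, hgr⟩ := hsurj c'
        have hmem : g * inl (Multiplicative.ofAdd v) * g⁻¹ ∈ H :=
          H.mul_mem (H.mul_mem hgH ((hWmem v).mp hv)) (H.inv_mem hgH)
        rw [conj_inl_aux] at hmem
        have : g.right = c' := hgr
        rw [this, hφ_apply] at hmem
        exact (hWmem _).mpr hmem
      rcases hirr W hinv with hbot | htop
      · -- H intersects kernel trivially; commutative
        have htriv : ∀ g ∈ H, rightHom g = 1 → g = 1 := by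
          intro g hg hg1
          have hgr : g ∈ (inl : Multiplicative V →* _).range := by
            rw [range_inl_eq_ker_rightHom]; exact hg1
          obtain ⟨a, rfl⟩ := hgr
          have hmem : a.toAdd ∈ W := (hWmem _).mpr (by simpa using hg)
          rw [hbot] at hmem
          have : a.toAdd = 0 := hmem
          have : a = 1 := by
            rw [show a = Multiplicative.ofAdd a.toAdd from rfl, this]; rfl
          rw [this, map_one]
        have hCcomm : ∀ a b : C, a * b = b * a := fun a b => by
          letI := hC.commGroup
          exact mul_comm a b
        have hcomm : ∀ a b : H, a * b = b * a := by
          rintro ⟨a, ha⟩ ⟨b, hb⟩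
          have hmem : a * b * a⁻¹ * b⁻¹ ∈ H :=
            mul_mem (mul_mem (mul_mem ha hb) (inv_mem ha)) (inv_mem hb)
          have h1 : rightHom (a * b * a⁻¹ * b⁻¹) = 1 := by
            rw [map_mul, map_mul, map_mul, map_inv, map_inv,
              hCcomm (rightHom a) (rightHom b)]
            group
          have h2 := htriv _ hmem h1
          rw [show a * b * a⁻¹ * b⁻¹ = (a * b) * (b * a)⁻¹ by group, mul_inv_eq_one] at h2
          exact Subtype.ext h2
        letI : CommGroup H := { (inferInstance : Group H) with mul_comm := hcomm }
        infer_instance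
      · -- W = ⊤ forces H = ⊤, contradiction
        exfalso
        apply hHne
        rw [Subgroup.eq_top_iff']
        intro g
        obtain ⟨h, hhH, hhr⟩ := hsurj (rightHom g)
        have hk : g * h⁻¹ ∈ (rightHom : Multiplicative V ⋊[φ] C →* C).ker := by
          rw [MonoidHom.mem_ker, map_mul, map_inv, hhr, mul_inv_cancel]
        rw [← range_inl_eq_ker_rightHom] at hk
        obtain ⟨a, ha⟩ := hk
        have hinlH : inl a ∈ H := by
          have : a.toAdd ∈ W := htop ▸ Submodule.mem_top
          have := (hWmem _).mp this
          simpa using this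
        have := H.mul_mem (ha ▸ hinlH) hhH
        simpa using this
  refine ⟨⟨inferInstance, hnotnil, hproper⟩, ?_, ?_⟩
  · intro r hr hrdvd
    rw [hcardG, hn] at hrdvd
    rcases (Nat.Prime.dvd_mul hr).mp hrdvd with h | h
    · exact Or.inl ((Nat.prime_dvd_prime_iff_eq hr hp).mp (hr.dvd_of_dvd_pow h))
    · exact Or.inr ((Nat.prime_dvd_prime_iff_eq hr hq).mp h)
  · intro P
    exact hSylP P ▸ hNnormal
end

section
/- Let p and q be distinct primes and let G be a Schmidt (p,q)-group. Then the quotient G/Φ(G) is again a Schmidt (p,q)-group; it has a unique minimal normal subgroup N; N is a p-group; and the quotient of G/Φ(G) by the centralizer of N in G/Φ(G) is cyclic of order q. -/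
open Subgroup
open scoped commutatorElement

/-- `N` is a minimal normal subgroup. -/
def IsMinimalNormal {G : Type*} [Group G] (N : Subgroup G) : Prop :=
  N.Normal ∧ N ≠ ⊥ ∧ ∀ M : Subgroup G, M.Normal → M ≠ ⊥ → M ≤ N → M = N

section Helpers

variable {H : Type*} [Group H]

/-- Dedekind modular law, version where the middle subgroup is normal. -/
lemma dedekind1 {A B C : Subgroup H} (hB : B.Normal) (hAC : A ≤ C) :
    (A ⊔ B) ⊓ C = A ⊔ (B ⊓ C) := by
  haveI := hB
  refine le_antisymm ?_ (le_inf (sup_le_sup_left inf_le_left A) (sup_le hAC inf_le_right))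
  intro x hx
  have hx1 : x ∈ ((A ⊔ B : Subgroup H) : Set H) := hx.1
  have hx2 : x ∈ C := hx.2
  rw [Subgroup.mul_normal] at hx1
  obtain ⟨a, ha, b, hb, rfl⟩ := hx1
  have hbC : b ∈ C := by
    have := C.mul_mem (C.inv_mem (hAC ha)) hx2
    simpa [mul_assoc] using this
  exact Subgroup.mul_mem _ (le_sup_left (a := A) (b := B ⊓ C) ha)
    (le_sup_right (a := A) (b := B ⊓ C) ⟨hb, hbC⟩)

/-- Dedekind modular law, version where the first subgroup is normal. -/
lemma dedekind2 {A B C : Subgroup H} (hA : A.Normal) (hAC : A ≤ C) :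
    (A ⊔ B) ⊓ C = A ⊔ (B ⊓ C) := by
  haveI := hA
  refine le_antisymm ?_ (le_inf (sup_le_sup_left inf_le_left A) (sup_le hAC inf_le_right))
  intro x hx
  have hx1 : x ∈ ((A ⊔ B : Subgroup H) : Set H) := hx.1
  have hx2 : x ∈ C := hx.2
  rw [Subgroup.normal_mul] at hx1
  obtain ⟨a, ha, b, hb, rfl⟩ := hx1
  have hbC : b ∈ C := by
    have := C.mul_mem (C.inv_mem (hAC ha)) hx2
    simpa [mul_assoc] using this
  exact Subgroup.mul_mem _ (le_sup_left (a := A) (b := B ⊓ C) ha)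
    (le_sup_right (a := A) (b := B ⊓ C) ⟨hb, hbC⟩)

/-- In a nilpotent subgroup `W`, elements of a `p`-subgroup and a `q`-subgroup commute. -/
lemma commute_of_nilpotent {p q : ℕ} [Fact p.Prime] [Fact q.Prime] (hpq : p ≠ q) [Finite H]
    {A B W : Subgroup H} (hW : Group.IsNilpotent W) (hA : A ≤ W) (hB : B ≤ W)
    (hAp : IsPGroup p A) (hBq : IsPGroup q B) :
    ∀ a ∈ A, ∀ b ∈ B, Commute a b := by
  intro a ha b hb
  obtain ⟨S, hS⟩ := (hAp.comap_of_injective W.subtype Subtype.coe_injective).exists_le_sylow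
  obtain ⟨T, hT⟩ := (hBq.comap_of_injective W.subtype Subtype.coe_injective).exists_le_sylow
  have hsyl : ∀ (r : ℕ) (_ : Fact r.Prime) (R : Sylow r W), (R : Subgroup W).Normal :=
    ((isNilpotent_of_finite_tfae (G := W)).out 0 3).mp hW
  have hSn : (S : Subgroup W).Normal := hsyl p ‹_› S
  have hTn : (T : Subgroup W).Normal := hsyl q ‹_› T
  have hd : Disjoint (S : Subgroup W) (T : Subgroup W) :=
    IsPGroup.disjoint_of_ne p q hpq _ _ S.isPGroup' T.isPGroup'
  have haS : (⟨a, hA ha⟩ : W) ∈ (S : Subgroup W) := hS (by simpa [Subgroup.mem_comap, Subgroup.mem_subgroupOf] using ha)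
  have hbT : (⟨b, hB hb⟩ : W) ∈ (T : Subgroup W) := hT (by simpa [Subgroup.mem_comap, Subgroup.mem_subgroupOf] using hb)
  have := Subgroup.commute_of_normal_of_disjoint _ _ hSn hTn hd _ _ haS hbT
  have h2 := congrArg (W.subtype) this
  exact (by simpa using h2 : a * b = b * a)

lemma isCoatom_map_of_ker_le {G K : Type*} [Group G] [Group K] {φ : G →* K}
    (hφ : Function.Surjective φ) {M : Subgroup G} (hM : IsCoatom M) (hker : φ.ker ≤ M) :
    IsCoatom (M.map φ) := by
  constructor
  · intro h
    have h2 : M = ⊤ := by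
      have := congrArg (Subgroup.comap φ) h
      rwa [Subgroup.comap_map_eq_self hker, Subgroup.comap_top] at this
    exact hM.1 h2
  · intro J hJ
    have h1 : M ≤ J.comap φ := by
      rw [← Subgroup.comap_map_eq_self hker]
      exact Subgroup.comap_mono hJ.le
    rcases h1.lt_or_eq with h | h
    · have htop := hM.2 _ h
      have := congrArg (Subgroup.map φ) htop
      rwa [Subgroup.map_comap_eq_self_of_surjective hφ,
        Subgroup.map_top_of_surjective _ hφ] at this
    · exfalso
      have := congrArg (Subgroup.map φ) h.symm
      rw [Subgroup.map_comap_eq_self_of_surjective hφ] at this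
      exact hJ.ne' this

lemma center_le_frattini [Finite H] (hnn : ¬ Group.IsNilpotent H)
    (hprop : ∀ K : Subgroup H, K ≠ ⊤ → Group.IsNilpotent K) :
    Subgroup.center H ≤ frattini H := by
  have hdef : frattini H = ⨅ M ∈ {M : Subgroup H | IsCoatom M}, M := rfl
  rw [hdef]
  refine le_iInf₂ fun M hM => ?_
  by_contra hc
  have hlt : M < M ⊔ Subgroup.center H :=
    lt_of_le_of_ne le_sup_left (fun h => hc (h ▸ le_sup_right))
  have htop : M ⊔ Subgroup.center H = ⊤ := hM.2 _ hlt
  have hMnil : Group.IsNilpotent M := hprop M hM.1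
  set f : ↥M →* H ⧸ Subgroup.center H := (QuotientGroup.mk' _).comp M.subtype with hf
  have hfs : Function.Surjective f := by
    intro x
    obtain ⟨g, rfl⟩ := QuotientGroup.mk'_surjective (Subgroup.center H) x
    have hg : g ∈ ((M ⊔ Subgroup.center H : Subgroup H) : Set H) := by
      rw [htop]; trivial
    rw [Subgroup.mul_normal] at hg
    obtain ⟨m, hm, z, hz, rfl⟩ := hg
    refine ⟨⟨m, hm⟩, ?_⟩
    simp only [hf, MonoidHom.comp_apply, Subgroup.coe_subtype]
    rw [QuotientGroup.mk'_apply, QuotientGroup.mk'_apply]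
    exact (QuotientGroup.mk_mul_of_mem m hz).symm
  have : Group.IsNilpotent (H ⧸ Subgroup.center H) := nilpotent_of_surjective f hfs
  exact hnn (of_quotient_center_nilpotent this)

lemma map_subtype_normal_of_char {P : Subgroup H} (hP : P.Normal) (K : Subgroup ↥P)
    [hK : K.Characteristic] : (K.map P.subtype).Normal := by
  constructor
  rintro x hx g
  obtain ⟨k, hk, rfl⟩ := hx
  have hmem : ∀ x : ↥P, g * (x : H) * g⁻¹ ∈ P := fun x => hP.conj_mem _ x.2 g
  have hmem' : ∀ x : ↥P, g⁻¹ * (x : H) * g ∈ P := fun x => by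
    simpa using hP.conj_mem _ x.2 g⁻¹
  set φ : ↥P ≃* ↥P :=
    { toFun := fun x => ⟨g * (x : H) * g⁻¹, hmem x⟩
      invFun := fun x => ⟨g⁻¹ * (x : H) * g, hmem' x⟩
      left_inv := fun x => by ext; simp; group
      right_inv := fun x => by ext; simp; group
      map_mul' := fun x y => by ext; simp [mul_assoc] } with hφ
  have hfix : K.comap (φ.symm : ↥P ≃* ↥P).toMonoidHom = K := hK.fixed φ.symm
  have hkφ : φ k ∈ K := by
    have h2 : φ k ∈ K.comap (φ.symm : ↥P ≃* ↥P).toMonoidHom → φ k ∈ K := by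
      rw [hfix]; exact id
    apply h2
    rw [Subgroup.mem_comap]
    simpa using hk
  exact ⟨φ k, hkφ, rfl⟩

end Helpers

lemma schmidt_quotient {p q : ℕ} (hp : p.Prime) (hq : q.Prime)
    (G : Type*) [Group G] (hG : IsSchmidtPQGroup p q G) :
    IsSchmidtPQGroup p q (G ⧸ frattini G) := by
  haveI : Fact p.Prime := ⟨hp⟩
  obtain ⟨⟨hfin, hnn, hprop⟩, hdiv, hsyl⟩ := hG
  haveI := hfin
  set φ := QuotientGroup.mk' (frattini G) with hφ
  have hφs : Function.Surjective φ := QuotientGroup.mk'_surjective _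
  have hkerφ : φ.ker = frattini G := QuotientGroup.ker_mk' _
  refine ⟨⟨inferInstance, ?_, ?_⟩, ?_, ?_⟩
  · -- non-nilpotent
    intro hnil
    apply hnn
    have htfae := (isNilpotent_of_finite_tfae (G := G)).out 2 0
    rw [← htfae]
    intro M hM
    have hker : φ.ker ≤ M := by rw [hkerφ]; exact frattini_le_coatom hM
    have hco := isCoatom_map_of_ker_le hφs hM hker
    have h02 := (isNilpotent_of_finite_tfae (G := G ⧸ frattini G)).out 0 2
    have hnorm : (M.map φ).Normal := h02.mp hnil _ hco
    have := hnorm.comap φ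
    rwa [Subgroup.comap_map_eq_self hker] at this
  · -- proper subgroups nilpotent
    intro Hb hne
    set K := Hb.comap φ with hK
    have hmc : K.map φ = Hb := Subgroup.map_comap_eq_self_of_surjective hφs Hb
    have hKne : K ≠ ⊤ := by
      intro h
      apply hne
      rw [← hmc, h, Subgroup.map_top_of_surjective _ hφs]
    have hKnil : Group.IsNilpotent K := hprop K hKne
    have hsurj : Function.Surjective (φ.subgroupMap K) := by
      rintro ⟨y, hy⟩
      obtain ⟨x, hx, hxy⟩ := hy
      exact ⟨⟨x, hx⟩, Subtype.ext hxy⟩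
    have : Group.IsNilpotent (K.map φ) := nilpotent_of_surjective _ hsurj
    rwa [hmc] at this
  · -- prime divisors
    intro r hr hrd
    refine hdiv r hr ?_
    rw [Subgroup.card_eq_card_quotient_mul_card_subgroup (frattini G)]
    exact Dvd.dvd.mul_right hrd _
  · -- Sylow p subgroups are normal
    intro S
    obtain ⟨P⟩ : Nonempty (Sylow p G) := inferInstance
    have hPn : (P : Subgroup G).Normal := hsyl P
    set Pm := (P : Subgroup G).map φ with hPm
    have hPmp : IsPGroup p Pm := P.isPGroup'.map φ
    have hPmn : Pm.Normal := hPn.map φ hφs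
    have hindex : ¬ p ∣ Pm.index := by
      have h1 : (Pm.comap φ).index = Pm.index := Subgroup.index_comap_of_surjective _ hφs
      have h2 : Pm.comap φ = (P : Subgroup G) ⊔ frattini G := by
        rw [hPm, Subgroup.comap_map_eq, hkerφ]
      have h3 : Pm.index ∣ (P : Subgroup G).index := by
        rw [← h1, h2]
        exact Subgroup.index_dvd_of_le le_sup_left
      intro hdvd
      exact P.not_dvd_index (hdvd.trans h3)
    obtain ⟨S', hS'⟩ := hPmp.exists_le_sylow
    have hrel : Pm.relIndex S' = 1 := by
      have hrdvd : Pm.relIndex S' ∣ Pm.index := Subgroup.relIndex_dvd_index_of_le hS'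
      have hcard : Pm.relIndex S' ∣ Nat.card S' :=
        Subgroup.index_dvd_card (Pm.subgroupOf S')
      obtain ⟨n, hn⟩ := IsPGroup.iff_card.mp S'.isPGroup'
      rw [hn] at hcard
      obtain ⟨k, hk, hke⟩ := (Nat.dvd_prime_pow hp).mp hcard
      rw [hke] at hrdvd ⊢
      rcases Nat.eq_zero_or_pos k with h0 | h1
      · rw [h0, pow_zero]
      · exact absurd ((dvd_pow_self p h1.ne').trans hrdvd) hindex
    have hS'eq : (S' : Subgroup (G ⧸ frattini G)) = Pm := by
      have := Subgroup.relIndex_eq_one.mp hrel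
      exact le_antisymm this hS'
    have hS'n : (S' : Subgroup (G ⧸ frattini G)).Normal := by rw [hS'eq]; exact hPmn
    haveI := Sylow.unique_of_normal S' hS'n
    have : S = S' := Subsingleton.elim _ _
    rw [this, hS'eq]
    exact hPmn

lemma frattini_quotient_eq_bot (G : Type*) [Group G] [Finite G] :
    frattini (G ⧸ frattini G) = ⊥ := by
  rw [eq_bot_iff]
  intro x hx
  obtain ⟨g, rfl⟩ := QuotientGroup.mk'_surjective (frattini G) x
  have hg : g ∈ frattini G := by
    have hdef : frattini G = ⨅ M ∈ {M : Subgroup G | IsCoatom M}, M := rfl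
    rw [hdef, Subgroup.mem_iInf]
    intro M
    rw [Subgroup.mem_iInf]
    intro hM
    have hker : (QuotientGroup.mk' (frattini G)).ker ≤ M := by
      rw [QuotientGroup.ker_mk']; exact frattini_le_coatom hM
    have hco := isCoatom_map_of_ker_le (QuotientGroup.mk'_surjective _) hM hker
    have hxM := frattini_le_coatom hco hx
    obtain ⟨m, hm, hme⟩ := hxM
    have hne2 : (m : G ⧸ frattini G) = (g : G ⧸ frattini G) := hme
    have hmg : m⁻¹ * g ∈ frattini G := QuotientGroup.eq.mp hne2
    have hge : g = m * (m⁻¹ * g) := by group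
    rw [hge]
    exact M.mul_mem hm (frattini_le_coatom hM hmg)
  rw [Subgroup.mem_bot, QuotientGroup.mk'_apply, QuotientGroup.eq_one_iff]
  exact hg

lemma schmidt_structure {p q : ℕ} (hp : p.Prime) (hq : q.Prime) (hpq : p ≠ q)
    (H : Type*) [Group H] (hH : IsSchmidtPQGroup p q H) (hFr : frattini H = ⊥) :
    ∃ N : Subgroup H, IsMinimalNormal N ∧ (∀ M : Subgroup H, IsMinimalNormal M → M = N) ∧
      IsPGroup p N ∧ Subgroup.centralizer (N : Set H) = N ∧
      (Subgroup.centralizer (N : Set H)).index = q := by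
  haveI hpf : Fact p.Prime := ⟨hp⟩
  haveI hqf : Fact q.Prime := ⟨hq⟩
  obtain ⟨⟨hfin, hnn, hprop⟩, hdiv, hsyl⟩ := hH
  haveI := hfin
  obtain ⟨P⟩ : Nonempty (Sylow p H) := inferInstance
  obtain ⟨Q⟩ : Nonempty (Sylow q H) := inferInstance
  have hPn : (P : Subgroup H).Normal := hsyl P
  have hcenterbot : Subgroup.center H = ⊥ :=
    le_bot_iff.mp (hFr ▸ center_le_frattini hnn hprop)
  have hdisj : Disjoint (P : Subgroup H) (Q : Subgroup H) :=
    IsPGroup.disjoint_of_ne p q hpq _ _ P.isPGroup' Q.isPGroup'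
  -- P ⊔ Q = ⊤
  have hPQ : (P : Subgroup H) ⊔ (Q : Subgroup H) = ⊤ := by
    have hi : ((P : Subgroup H) ⊔ (Q : Subgroup H)).index = 1 := by
      by_contra hne
      obtain ⟨r, hr, hrd⟩ := Nat.exists_prime_and_dvd hne
      have hrcard : r ∣ Nat.card H := hrd.trans (Subgroup.index_dvd_card _)
      have hip : ((P : Subgroup H) ⊔ (Q : Subgroup H)).index ∣ (P : Subgroup H).index :=
        Subgroup.index_dvd_of_le le_sup_left
      have hiq : ((P : Subgroup H) ⊔ (Q : Subgroup H)).index ∣ (Q : Subgroup H).index :=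
        Subgroup.index_dvd_of_le le_sup_right
      rcases hdiv r hr hrcard with rfl | rfl
      · exact P.not_dvd_index (hrd.trans hip)
      · exact Q.not_dvd_index (hrd.trans hiq)
    exact Subgroup.index_eq_one.mp hi
  -- key commuting fact
  have hkey : ∀ R : Subgroup H, R ≤ (Q : Subgroup H) → R ≠ (Q : Subgroup H) →
      ∀ g ∈ (P : Subgroup H), ∀ r ∈ R, Commute g r := by
    intro R hRQ hRne g hg r hr
    have hW : (P : Subgroup H) ⊔ R ≠ ⊤ := by
      intro htop
      apply hRne
      have hded : (R ⊔ (P : Subgroup H)) ⊓ (Q : Subgroup H)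
          = R ⊔ ((P : Subgroup H) ⊓ (Q : Subgroup H)) := dedekind1 hPn hRQ
      rw [sup_comm R (P : Subgroup H), htop, top_inf_eq, hdisj.eq_bot, sup_bot_eq] at hded
      exact hded.symm
    exact commute_of_nilpotent hpq (hprop _ hW) le_sup_left le_sup_right P.isPGroup'
      (Q.isPGroup'.to_le hRQ) g hg r hr
  -- Q has a generator
  have hQcyc : ∃ y ∈ (Q : Subgroup H), Subgroup.zpowers y = (Q : Subgroup H) := by
    by_contra hc
    push_neg at hc
    have hcomm : ∀ g ∈ (P : Subgroup H), ∀ x ∈ (Q : Subgroup H), Commute g x := by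
      intro g hg x hx
      exact hkey (Subgroup.zpowers x) ((Subgroup.zpowers_le).mpr hx) (hc x hx) g hg x
        (Subgroup.mem_zpowers x)
    have hQn : (Q : Subgroup H).Normal := by
      rw [← Subgroup.normalizer_eq_top_iff, eq_top_iff, ← hPQ]
      refine sup_le ?_ Subgroup.le_normalizer
      intro g hg
      rw [Subgroup.mem_normalizer_iff]
      intro x
      constructor
      · intro hx
        have hce := (hcomm g hg x hx).eq
        have hgx : g * x * g⁻¹ = x := by rw [hce]; group
        rw [hgx]; exact hx
      · intro hx
        have h3 : g * (g * x * g⁻¹) = g * x := by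
          rw [(hcomm g hg _ hx).eq]; group
        have h4 : g * x * g⁻¹ = x := mul_left_cancel h3
        rwa [h4] at hx
    have h30 := (isNilpotent_of_finite_tfae (G := H)).out 3 0
    apply hnn
    apply h30.mp
    intro r hrf S
    by_cases hrp : r = p
    · subst hrp; exact hsyl S
    by_cases hrq : r = q
    · subst hrq
      haveI := Sylow.unique_of_normal Q hQn
      have : S = Q := Subsingleton.elim _ _
      rw [this]; exact hQn
    · have hSbot : (S : Subgroup H) = ⊥ := by
        obtain ⟨n, hn⟩ := IsPGroup.iff_card.mp S.isPGroup'
        rcases Nat.eq_zero_or_pos n with h0 | h1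
        · rw [h0, pow_zero] at hn
          exact Subgroup.card_eq_one.mp hn
        · exfalso
          have hrdvd : r ∣ Nat.card H := by
            refine dvd_trans ?_ (Subgroup.card_subgroup_dvd_card (S : Subgroup H))
            rw [hn]
            exact dvd_pow_self r h1.ne'
          rcases hdiv r hrf.out hrdvd with h | h
          · exact hrp h
          · exact hrq h
      rw [hSbot]
      infer_instance
  obtain ⟨y, hyQ, hygen⟩ := hQcyc
  -- H is neither a p-group nor a q-group
  have hPneTop : (P : Subgroup H) ≠ ⊤ := by
    intro h
    apply hnn
    have hpg : IsPGroup p H := by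
      intro g
      obtain ⟨n, hn⟩ := P.isPGroup' ⟨g, h ▸ Subgroup.mem_top g⟩
      exact ⟨n, by simpa [Subtype.ext_iff] using hn⟩
    exact hpg.isNilpotent
  have hQneBot : (Q : Subgroup H) ≠ ⊥ := by
    intro h; apply hPneTop; rw [← hPQ, h, sup_bot_eq]
  have hPneBot : (P : Subgroup H) ≠ ⊥ := by
    intro h
    apply hnn
    have hQtop : (Q : Subgroup H) = ⊤ := by rw [← hPQ, h, bot_sup_eq]
    have hqg : IsPGroup q H := by
      intro g
      obtain ⟨n, hn⟩ := Q.isPGroup' ⟨g, hQtop ▸ Subgroup.mem_top g⟩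
      exact ⟨n, by simpa [Subtype.ext_iff] using hn⟩
    exact hqg.isNilpotent
  have hyne : y ≠ 1 := by
    rintro rfl
    apply hQneBot
    rw [← hygen, Subgroup.zpowers_one_eq_bot]
  -- the order of y is a positive power of q
  have hyord : ∃ b : ℕ, orderOf y = q ^ b := by
    obtain ⟨k, hk⟩ := Q.isPGroup' ⟨y, hyQ⟩
    have hk' : y ^ (q ^ k) = 1 := by simpa [Subtype.ext_iff] using hk
    obtain ⟨b, _, hbe⟩ := (Nat.dvd_prime_pow hq).mp (orderOf_dvd_of_pow_eq_one hk')
    exact ⟨b, hbe⟩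
  obtain ⟨b, hb⟩ := hyord
  have hb1 : 1 ≤ b := by
    by_contra hb0
    push_neg at hb0
    interval_cases b
    rw [pow_zero, orderOf_eq_one_iff] at hb
    exact hyne hb
  -- y ^ q is central, hence trivial
  have hyq1 : y ^ q = 1 := by
    have hRQ : Subgroup.zpowers (y ^ q) ≤ (Q : Subgroup H) :=
      (Subgroup.zpowers_le).mpr (Subgroup.pow_mem _ hyQ q)
    have hRne : Subgroup.zpowers (y ^ q) ≠ (Q : Subgroup H) := by
      intro h
      have e1 : Nat.card (Subgroup.zpowers (y ^ q)) = q ^ (b - 1) := by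
        rw [Nat.card_zpowers, orderOf_pow' y hq.ne_zero, hb]
        have hgcd : Nat.gcd (q ^ b) q = q := Nat.gcd_eq_right (dvd_pow_self q (by omega))
        rw [hgcd]
        have hqb : q ^ b = q ^ (b - 1) * q := by
          rw [← pow_succ, Nat.sub_add_cancel hb1]
        rw [hqb, Nat.mul_div_cancel _ hq.pos]
      have e2 : Nat.card (Subgroup.zpowers y) = q ^ b := by rw [Nat.card_zpowers, hb]
      rw [h] at e1
      rw [hygen] at e2
      rw [e2] at e1
      have := Nat.pow_right_injective hq.two_le e1.symm
      omega
    have hPcomm : ∀ g ∈ (P : Subgroup H), Commute g (y ^ q) := fun g hg =>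
      hkey _ hRQ hRne g hg _ (Subgroup.mem_zpowers _)
    have hctr : y ^ q ∈ Subgroup.center H := by
      rw [Subgroup.mem_center_iff]
      intro g
      have hg : g ∈ (((P : Subgroup H) ⊔ (Q : Subgroup H) : Subgroup H) : Set H) := by
        rw [hPQ]; trivial
      rw [Subgroup.normal_mul] at hg
      obtain ⟨u, hu, v, hv, rfl⟩ := hg
      have hvy : v ∈ Subgroup.zpowers y := by rw [hygen]; exact hv
      obtain ⟨k, hk⟩ := hvy
      have hcv : Commute v (y ^ q) := by
        rw [← hk]
        exact ((Commute.refl y).zpow_left k).pow_right q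
      have hcu : Commute u (y ^ q) := hPcomm u hu
      exact (hcu.mul_left hcv).eq
    have := hcenterbot ▸ hctr
    rwa [Subgroup.mem_bot] at this
  have hordy : orderOf y = q := by
    have hdvd : orderOf y ∣ q := orderOf_dvd_of_pow_eq_one hyq1
    rcases (Nat.Prime.eq_one_or_self_of_dvd hq _ hdvd) with h1 | h
    · exact absurd (orderOf_eq_one_iff.mp h1) hyne
    · exact h
  have hcardQ : Nat.card (Q : Subgroup H) = q := by
    rw [← hygen, Nat.card_zpowers, hordy]
  -- index of P is q
  have hindexP : (P : Subgroup H).index = q := by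
    set f : ↥(Q : Subgroup H) →* H ⧸ (P : Subgroup H) :=
      (QuotientGroup.mk' _).comp (Q : Subgroup H).subtype with hfd
    have hinj : Function.Injective f := by
      rw [← MonoidHom.ker_eq_bot_iff, eq_bot_iff]
      rintro ⟨x, hx⟩ hker
      have hxP : x ∈ (P : Subgroup H) := by
        rw [MonoidHom.mem_ker] at hker
        have : ((QuotientGroup.mk' (P : Subgroup H)) x) = 1 := hker
        rwa [QuotientGroup.mk'_apply, QuotientGroup.eq_one_iff] at this
      have hxb : x ∈ ((P : Subgroup H) ⊓ (Q : Subgroup H)) := ⟨hxP, hx⟩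
      rw [hdisj.eq_bot, Subgroup.mem_bot] at hxb
      rw [Subgroup.mem_bot]
      exact Subtype.ext hxb
    have hsurj : Function.Surjective f := by
      intro z
      obtain ⟨g, rfl⟩ := QuotientGroup.mk'_surjective _ z
      have hg : g ∈ (((P : Subgroup H) ⊔ (Q : Subgroup H) : Subgroup H) : Set H) := by
        rw [hPQ]; trivial
      rw [Subgroup.normal_mul] at hg
      obtain ⟨u, hu, v, hv, rfl⟩ := hg
      refine ⟨⟨v, hv⟩, ?_⟩
      simp only [hfd, MonoidHom.comp_apply, Subgroup.coe_subtype]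
      rw [QuotientGroup.mk'_apply, QuotientGroup.mk'_apply]
      apply (QuotientGroup.eq).mpr
      have hconj : v⁻¹ * u * v ∈ (P : Subgroup H) := by
        have := hPn.conj_mem u hu v⁻¹
        simpa using this
      simpa [mul_assoc] using hconj
    have hcongr : Nat.card (H ⧸ (P : Subgroup H)) = Nat.card (Q : Subgroup H) :=
      (Nat.card_congr (Equiv.ofBijective f ⟨hinj, hsurj⟩)).symm
    rw [Subgroup.index_eq_card, hcongr, hcardQ]
  -- frattini of P is trivial
  have hfratP : frattini ↥(P : Subgroup H) = ⊥ := by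
    set K := (frattini ↥(P : Subgroup H)).map (P : Subgroup H).subtype with hKdef
    have hKP : K ≤ (P : Subgroup H) := Subgroup.map_subtype_le _
    have hKn : K.Normal := map_subtype_normal_of_char hPn _
    have hKle : K ≤ frattini H := by
      have hdef : frattini H = ⨅ M ∈ {M : Subgroup H | IsCoatom M}, M := rfl
      rw [hdef]
      refine le_iInf₂ fun M hM => ?_
      by_contra hKM
      have hlt : M < K ⊔ M := lt_of_le_of_ne le_sup_right (fun h => hKM (h ▸ le_sup_left))
      have htop : K ⊔ M = ⊤ := hM.2 _ hlt
      have hded : (K ⊔ M) ⊓ (P : Subgroup H) = K ⊔ (M ⊓ (P : Subgroup H)) :=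
        dedekind2 hKn hKP
      rw [htop, top_inf_eq] at hded
      have hsub : (M ⊓ (P : Subgroup H)).subgroupOf (P : Subgroup H)
          ⊔ frattini ↥(P : Subgroup H) = ⊤ := by
        rw [eq_top_iff]
        rintro x -
        have hx : (x : H) ∈ ((K ⊔ (M ⊓ (P : Subgroup H)) : Subgroup H) : Set H) := by
          rw [← hded]; exact x.2
        haveI := hKn
        rw [Subgroup.normal_mul] at hx
        obtain ⟨a, ha, m, hm, hxe⟩ := hx
        obtain ⟨a', ha', rfl⟩ := ha
        have hmP : m ∈ (P : Subgroup H) := hm.2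
        have hxeq : x = a' * ⟨m, hmP⟩ := by
          ext
          exact hxe.symm
        rw [hxeq]
        refine Subgroup.mul_mem _
          ((le_sup_right :
            frattini ↥(P : Subgroup H) ≤ (M ⊓ (P : Subgroup H)).subgroupOf (P : Subgroup H)
              ⊔ frattini ↥(P : Subgroup H)) ha')
          ((le_sup_left :
            (M ⊓ (P : Subgroup H)).subgroupOf (P : Subgroup H) ≤ (M ⊓ (P : Subgroup H)).subgroupOf (P : Subgroup H)
              ⊔ frattini ↥(P : Subgroup H)) ?_)
        rw [Subgroup.mem_subgroupOf]
        exact hm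
      have hMtop := frattini_nongenerating hsub
      have hPM : (P : Subgroup H) ≤ M :=
        (le_inf_iff.mp (Subgroup.subgroupOf_eq_top.mp hMtop)).1
      exact hKM (hKP.trans hPM)
    rw [hFr, le_bot_iff, hKdef,
      Subgroup.map_eq_bot_iff_of_injective _ Subtype.coe_injective] at hKle
    exact hKle
  -- P is abelian
  have hPab : ∀ a ∈ (P : Subgroup H), ∀ b ∈ (P : Subgroup H), Commute a b := by
    have hTnil : Group.IsNilpotent ↥(P : Subgroup H) := P.isPGroup'.isNilpotent
    have hcommle : ⁅(⊤ : Subgroup ↥(P : Subgroup H)), (⊤ : Subgroup ↥(P : Subgroup H))⁆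
        ≤ frattini ↥(P : Subgroup H) := by
      have hdef : frattini ↥(P : Subgroup H)
          = ⨅ M ∈ {M : Subgroup ↥(P : Subgroup H) | IsCoatom M}, M := rfl
      rw [hdef]
      refine le_iInf₂ fun M hM => ?_
      have h02 := (isNilpotent_of_finite_tfae (G := ↥(P : Subgroup H))).out 0 2
      have hMn : M.Normal := h02.mp hTnil M hM
      have honly : ∀ J : Subgroup (↥(P : Subgroup H) ⧸ M), J = ⊥ ∨ J = ⊤ := by
        intro J
        have hker : M ≤ J.comap (QuotientGroup.mk' M) := by
          intro m hm
          rw [Subgroup.mem_comap]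
          have hm1 : (QuotientGroup.mk' M) m = 1 := by
            rw [QuotientGroup.mk'_apply, QuotientGroup.eq_one_iff]; exact hm
          rw [hm1]; exact J.one_mem
        rcases hker.lt_or_eq with hlt | heq
        · right
          have := hM.2 _ hlt
          have h2 := congrArg (Subgroup.map (QuotientGroup.mk' M)) this
          rwa [Subgroup.map_comap_eq_self_of_surjective (QuotientGroup.mk'_surjective M),
            Subgroup.map_top_of_surjective _ (QuotientGroup.mk'_surjective M)] at h2
        · left
          have h2 := congrArg (Subgroup.map (QuotientGroup.mk' M)) heq
          rw [Subgroup.map_comap_eq_self_of_surjective (QuotientGroup.mk'_surjective M)] at h2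
          rw [← h2, Subgroup.map_eq_bot_iff, QuotientGroup.ker_mk']
      have hcom : ∀ x z : (↥(P : Subgroup H) ⧸ M), Commute x z := by
        intro x z
        by_cases hx : x = 1
        · rw [hx]; exact Commute.one_left z
        · have hzx : Subgroup.zpowers x = ⊤ := by
            rcases honly (Subgroup.zpowers x) with h | h
            · exact absurd ((Subgroup.zpowers_eq_bot).mp h) hx
            · exact h
          have hz : z ∈ Subgroup.zpowers x := by rw [hzx]; trivial
          obtain ⟨k, hk⟩ := hz
          rw [← hk]
          exact (Commute.refl x).zpow_right k
      rw [Subgroup.commutator_le]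
      intro g1 _ g2 _
      have : (QuotientGroup.mk' M) ⁅g1, g2⁆ = 1 := by
        rw [map_commutatorElement]
        exact commutatorElement_eq_one_iff_commute.mpr (hcom _ _)
      rwa [QuotientGroup.mk'_apply, QuotientGroup.eq_one_iff] at this
    rw [hfratP, le_bot_iff, Subgroup.commutator_eq_bot_iff_le_centralizer] at hcommle
    intro a ha b hb
    have := hcommle (Subgroup.mem_top ⟨a, ha⟩)
    rw [Subgroup.mem_centralizer_iff] at this
    have h2 := this ⟨b, hb⟩ (Subgroup.mem_top _)
    have h3 := congrArg ((P : Subgroup H).subtype) h2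
    simpa [Commute, SemiconjBy, eq_comm] using h3
  -- centralizer of P is P, with index q
  have hPC : (P : Subgroup H) ≤ Subgroup.centralizer ((P : Subgroup H) : Set H) := by
    intro x hx
    rw [Subgroup.mem_centralizer_iff]
    intro y hy
    exact (hPab y hy x hx).eq
  have hCne : Subgroup.centralizer ((P : Subgroup H) : Set H) ≠ ⊤ := by
    intro h
    have hPz : (P : Subgroup H) ≤ Subgroup.center H := by
      intro x hx
      rw [Subgroup.mem_center_iff]
      intro g
      have hg : g ∈ Subgroup.centralizer ((P : Subgroup H) : Set H) := h ▸ Subgroup.mem_top g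
      exact (Subgroup.mem_centralizer_iff.mp hg x hx).symm
    rw [hcenterbot, le_bot_iff] at hPz
    exact hPneBot hPz
  have hCidx : (Subgroup.centralizer ((P : Subgroup H) : Set H)).index = q := by
    have hCdvd : (Subgroup.centralizer ((P : Subgroup H) : Set H)).index ∣ q :=
      hindexP ▸ Subgroup.index_dvd_of_le hPC
    rcases (Nat.Prime.eq_one_or_self_of_dvd hq _ hCdvd) with h1 | h
    · exact absurd (Subgroup.index_eq_one.mp h1) hCne
    · exact h
  have hCeq : Subgroup.centralizer ((P : Subgroup H) : Set H) = (P : Subgroup H) := by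
    have hc1 : Nat.card (Subgroup.centralizer ((P : Subgroup H) : Set H)) * q = Nat.card H := by
      rw [← hCidx]; exact Subgroup.card_mul_index _
    have hc2 : Nat.card (P : Subgroup H) * q = Nat.card H := by
      rw [← hindexP]; exact Subgroup.card_mul_index _
    have hcard : Nat.card (Subgroup.centralizer ((P : Subgroup H) : Set H))
        = Nat.card (P : Subgroup H) :=
      Nat.eq_of_mul_eq_mul_right hq.pos (hc1.trans hc2.symm)
    exact (Subgroup.eq_of_le_of_card_ge hPC (le_of_eq hcard)).symm
  -- minimality
  have hmin : ∀ K : Subgroup H, K.Normal → K ≠ ⊥ → K ≤ (P : Subgroup H) → K = (P : Subgroup H) := by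
    intro K hKn hKne hKP
    by_contra hKneP
    have hW : K ⊔ (Q : Subgroup H) ≠ ⊤ := by
      intro htop
      apply hKneP
      have hded : (K ⊔ (Q : Subgroup H)) ⊓ (P : Subgroup H)
          = K ⊔ ((Q : Subgroup H) ⊓ (P : Subgroup H)) := dedekind2 hKn hKP
      rw [htop, top_inf_eq, (hdisj.symm).eq_bot, sup_bot_eq] at hded
      exact hded.symm
    have hnil := hprop _ hW
    have hcommKQ : ∀ k ∈ K, ∀ x ∈ (Q : Subgroup H), Commute k x := fun k hk x hx =>
      commute_of_nilpotent hpq hnil le_sup_left le_sup_right (P.isPGroup'.to_le hKP)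
        Q.isPGroup' k hk x hx
    have hKz : K ≤ Subgroup.center H := by
      intro k hk
      rw [Subgroup.mem_center_iff]
      intro g
      have hg : g ∈ (((P : Subgroup H) ⊔ (Q : Subgroup H) : Subgroup H) : Set H) := by
        rw [hPQ]; trivial
      rw [Subgroup.normal_mul] at hg
      obtain ⟨u, hu, v, hv, rfl⟩ := hg
      have h1 : Commute u k := hPab u hu k (hKP hk)
      have h2 : Commute v k := (hcommKQ k hk v hv).symm
      exact (h1.mul_left h2).eq
    rw [hcenterbot, le_bot_iff] at hKz
    exact hKne hKz
  -- uniqueness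
  have huniq : ∀ M : Subgroup H, IsMinimalNormal M → M = (P : Subgroup H) := by
    rintro M ⟨hMn, hMne, hMmin⟩
    by_cases hMP : M ⊓ (P : Subgroup H) = ⊥
    · exfalso
      haveI := hMn
      haveI := hPn
      have hcomle : ⁅M, (P : Subgroup H)⁆ ≤ M ⊓ (P : Subgroup H) :=
        le_inf (Subgroup.commutator_le_left _ _) (Subgroup.commutator_le_right _ _)
      have hMC : M ≤ Subgroup.centralizer ((P : Subgroup H) : Set H) := by
        intro m hm
        rw [Subgroup.mem_centralizer_iff]
        intro y hy
        have hcb : ⁅m, y⁆ ∈ (⊥ : Subgroup H) :=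
          hMP ▸ hcomle (Subgroup.commutator_mem_commutator hm hy)
        rw [Subgroup.mem_bot, commutatorElement_eq_one_iff_commute] at hcb
        exact hcb.symm.eq
      rw [hCeq] at hMC
      have : M = ⊥ := by
        rw [eq_bot_iff, ← hMP]
        exact le_inf le_rfl hMC
      exact hMne this
    · have hMPnormal : (M ⊓ (P : Subgroup H)).Normal :=
        ⟨fun x hx g => ⟨hMn.conj_mem _ hx.1 g, hPn.conj_mem _ hx.2 g⟩⟩
      have h1 : M ⊓ (P : Subgroup H) = (P : Subgroup H) := hmin _ hMPnormal hMP inf_le_right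
      have hNM : (P : Subgroup H) ≤ M := by rw [← h1]; exact inf_le_left
      exact (hMmin _ hPn hPneBot hNM).symm
  exact ⟨(P : Subgroup H), ⟨hPn, hPneBot, hmin⟩, huniq, P.isPGroup', hCeq, hCidx⟩

theorem statement_10 (p q : ℕ) (hp : p.Prime) (hq : q.Prime) (hpq : p ≠ q)
    (G : Type*) [Group G] (hG : IsSchmidtPQGroup p q G) :
    IsSchmidtPQGroup p q (G ⧸ frattini G) ∧
    ∃ N : Subgroup (G ⧸ frattini G), IsMinimalNormal N ∧
      (∀ M : Subgroup (G ⧸ frattini G), IsMinimalNormal M → M = N) ∧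
      IsPGroup p N ∧
      ∃ _ : (Subgroup.centralizer (N : Set (G ⧸ frattini G))).Normal,
        IsCyclic ((G ⧸ frattini G) ⧸ Subgroup.centralizer (N : Set (G ⧸ frattini G))) ∧
        Nat.card ((G ⧸ frattini G) ⧸ Subgroup.centralizer (N : Set (G ⧸ frattini G))) = q := by
  haveI hqf : Fact q.Prime := ⟨hq⟩
  haveI : Finite G := hG.1.1
  have hbar : IsSchmidtPQGroup p q (G ⧸ frattini G) := schmidt_quotient hp hq G hG
  have hfr : frattini (G ⧸ frattini G) = ⊥ := frattini_quotient_eq_bot G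
  obtain ⟨N, hminN, huniq, hpN, hCeq, hCidx⟩ := schmidt_structure hp hq hpq _ hbar hfr
  haveI : Finite (G ⧸ frattini G) := hbar.1.1
  have hnormal : (Subgroup.centralizer (N : Set (G ⧸ frattini G))).Normal := by
    rw [hCeq]; exact hminN.1
  have hcard : Nat.card ((G ⧸ frattini G) ⧸ Subgroup.centralizer (N : Set (G ⧸ frattini G))) = q := by
    rw [← Subgroup.index_eq_card]
    exact hCidx
  exact ⟨hbar, N, hminN, huniq, hpN, hnormal, isCyclic_of_prime_card hcard, hcard⟩
end

section
/- Let G be a finite group that is not soluble but all of whose proper subgroups are soluble. Then G/Φ(G) is a nonabelian simple group, and every proper subgroup of G/Φ(G) is soluble. -/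
open Subgroup QuotientGroup

theorem statement_11 (G : Type*) [Group G] [Finite G]
    (hns : ¬ IsSolvable G) (hmin : ∀ H : Subgroup G, H ≠ ⊤ → IsSolvable H) :
    IsSimpleGroup (G ⧸ frattini G) ∧ (¬ ∀ a b : G ⧸ frattini G, a * b = b * a) ∧
    (∀ H : Subgroup (G ⧸ frattini G), H ≠ ⊤ → IsSolvable H) := by
  have hGnt : Nontrivial G := by
    by_contra h
    rw [not_nontrivial_iff_subsingleton] at h
    exact hns (isSolvable_of_comm fun a b => Subsingleton.elim _ _)
  -- frattini G ≠ ⊤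
  have hΦne : frattini G ≠ ⊤ := by
    obtain (h | ⟨K, hK, -⟩) := eq_top_or_exists_le_coatom (⊥ : Subgroup G)
    · exact absurd h.symm top_ne_bot
    · intro h
      exact hK.1 (top_le_iff.mp (h ▸ frattini_le_coatom hK))
  have hΦs : Group.IsSolvable (frattini G) := hmin _ hΦne
  have hsurj : Function.Surjective (QuotientGroup.mk' (frattini G)) :=
    QuotientGroup.mk'_surjective (frattini G)
  have hcinj : Function.Injective (comap (QuotientGroup.mk' (frattini G))) :=
    comap_injective hsurj
  -- every proper subgroup of the quotient is solvable
  have hsolv : ∀ H : Subgroup (G ⧸ frattini G), H ≠ ⊤ → IsSolvable H := by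
    intro H hH
    have hMne : comap (QuotientGroup.mk' (frattini G)) H ≠ ⊤ := by
      intro h
      exact hH (hcinj (by rw [comap_top]; exact h))
    have : Group.IsSolvable (comap (QuotientGroup.mk' (frattini G)) H) := hmin _ hMne
    have heq : map (QuotientGroup.mk' (frattini G))
        (comap (QuotientGroup.mk' (frattini G)) H) = H :=
      map_comap_eq_self_of_surjective hsurj H
    have := solvable_of_surjective
      (MonoidHom.subgroupMap_surjective (QuotientGroup.mk' (frattini G))
        (comap (QuotientGroup.mk' (frattini G)) H))
    rwa [heq] at this
  -- the quotient is not solvable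
  have hQns : ¬ Group.IsSolvable (G ⧸ frattini G) := by
    intro h
    exact hns (solvable_of_ker_le_range (frattini G).subtype
      (QuotientGroup.mk' (frattini G))
      (by rw [QuotientGroup.ker_mk', Subgroup.range_subtype]))
  have hQnt : Nontrivial (G ⧸ frattini G) := by
    by_contra h
    rw [not_nontrivial_iff_subsingleton] at h
    exact hQns (isSolvable_of_comm fun a b => Subsingleton.elim _ _)
  refine ⟨⟨?_⟩, fun h => hQns (isSolvable_of_comm h), hsolv⟩
  intro N hN
  by_contra hcon
  push_neg at hcon
  obtain ⟨hNbot, hNtop⟩ := hcon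
  -- N is solvable
  have hNs : Group.IsSolvable N := hsolv N hNtop
  -- preimage M of N in G
  have hΦleM : frattini G ≤ comap (QuotientGroup.mk' (frattini G)) N := by
    have h1 := Subgroup.ker_le_comap (f := QuotientGroup.mk' (frattini G)) N
    rwa [QuotientGroup.ker_mk'] at h1
  have hmapM : map (QuotientGroup.mk' (frattini G))
      (comap (QuotientGroup.mk' (frattini G)) N) = N :=
    map_comap_eq_self_of_surjective hsurj N
  -- M is not contained in the Frattini subgroup
  have hMnle : ¬ comap (QuotientGroup.mk' (frattini G)) N ≤ frattini G := by
    intro h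
    apply hNbot
    rw [← hmapM]
    refine le_bot_iff.mp ?_
    intro x hx
    obtain ⟨g, hg, rfl⟩ := hx
    have := h hg
    simpa [Subgroup.mem_bot, QuotientGroup.eq_one_iff] using this
  -- find a maximal subgroup K not containing M
  have hex : ¬ comap (QuotientGroup.mk' (frattini G)) N ≤
      ⨅ K ∈ {H : Subgroup G | IsCoatom H}, K := hMnle
  rw [le_iInf₂_iff] at hex
  push_neg at hex
  obtain ⟨K, hK, hMK⟩ := hex
  -- K ⊔ M = ⊤
  have hKM : K ⊔ comap (QuotientGroup.mk' (frattini G)) N = ⊤ := by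
    refine hK.2 _ (lt_of_le_of_ne le_sup_left fun h => hMK ?_)
    exact le_of_le_of_eq le_sup_right h.symm
  have hKs : Group.IsSolvable K := hmin K hK.1
  have hMnormal : (comap (QuotientGroup.mk' (frattini G)) N).Normal :=
    hN.comap _
  have hmapKtop : map (QuotientGroup.mk'
      (comap (QuotientGroup.mk' (frattini G)) N)) K = ⊤ := by
    apply comap_injective
      (QuotientGroup.mk'_surjective (comap (QuotientGroup.mk' (frattini G)) N))
    rw [comap_map_eq, comap_top, QuotientGroup.ker_mk']
    exact hKM
  have hGMs : Group.IsSolvable (G ⧸ comap (QuotientGroup.mk' (frattini G)) N) := by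
    have hsur : Function.Surjective ((QuotientGroup.mk'
        (comap (QuotientGroup.mk' (frattini G)) N)).comp K.subtype) := by
      rw [← MonoidHom.range_eq_top, MonoidHom.range_comp, Subgroup.range_subtype]
      exact hmapKtop
    exact solvable_of_surjective hsur
  -- (G ⧸ Φ) ⧸ N ≃* G ⧸ M is solvable
  have hQNs : Group.IsSolvable ((G ⧸ frattini G) ⧸ N) := by
    haveI := hMnormal
    haveI := hN
    have e1 := QuotientGroup.quotientMulEquivOfEq (G := G ⧸ frattini G) hmapM.symm
    have e2 := QuotientGroup.quotientQuotientEquivQuotient (frattini G)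
      (comap (QuotientGroup.mk' (frattini G)) N) hΦleM
    exact solvable_of_solvable_injective (f := (e1.trans e2).toMonoidHom) (e1.trans e2).injective
  -- hence G ⧸ Φ is solvable: contradiction
  exact hQns (solvable_of_ker_le_range N.subtype (QuotientGroup.mk' N)
    (by rw [QuotientGroup.ker_mk', Subgroup.range_subtype]))
end
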